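/- arXiv:2402.14343 — 3 statements merged into one kernel-verified Lean document; each statement's English description precedes it below -/
import Mathlib

section
/- Let d ≥ 3 be an integer such that both d and (d−1)/2 are odd. Then the set of extreme points of Ξ is exactly 𝒱, i.e., the set of extreme points of the convex hull of 𝒱 equals 𝒱. -/
open Set Pointwise

noncomputable section

variable (d : ℕ)

/-- The vertices of the hypercube `[0,1]^d`. -/
def cubeVerts : Set (Fin d → ℝ) := {x | ∀ i, x i = 0 ∨ x i = 1}

/-- The set `𝒞` of centers of the `(d-1)/2`-dimensional faces of `[0,1]^d`: points with
exactly `(d-1)/2` coordinates equal to `1/2` and all remaining coordinates in `{0,1}`. -/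
def centerSet : Set (Fin d → ℝ) :=
  {x | (∀ i, x i = 0 ∨ x i = 1/2 ∨ x i = 1) ∧ {i | x i = 1/2}.ncard = (d - 1) / 2}

/-- The slab `L` bounded by the hyperplanes `H_{(d-1)/2}` and `H_{(d+1)/2}`. -/
def slabL : Set (Fin d → ℝ) :=
  {x | ((d : ℝ) - 1) / 2 ≤ ∑ i, x i ∧ ∑ i, x i ≤ ((d : ℝ) + 1) / 2}

/-- The set `𝒱 = (𝒞 ∖ L) ∪ ({0,1}^d ∩ L)`. -/
def vSet : Set (Fin d → ℝ) := (centerSet d \ slabL d) ∪ (cubeVerts d ∩ slabL d)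

/-- The polytope `Ξ`, the convex hull of `𝒱`. -/
def Xi : Set (Fin d → ℝ) := convexHull ℝ (vSet d)

/- ### Auxiliary lemmas -/

lemma mem_extremePoints_of_max {E : Type*} [AddCommGroup E] [Module ℝ E]
    {S : Set E} {x : E} {f : E → ℝ} (hf : IsLinearMap ℝ f) (hx : x ∈ S)
    (hsep : ∀ u ∈ S, u ≠ x → f u < f x) :
    x ∈ Set.extremePoints ℝ (convexHull ℝ S) := by
  by_cases hS : (S \ {x}).Nonempty
  · have hhull : convexHull ℝ (S \ {x}) ⊆ {w | f w < f x} :=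
      convexHull_min (fun u hu => hsep u hu.1 hu.2) (convex_halfSpace_lt hf (f x))
    have hSle : convexHull ℝ S ⊆ {w | f w ≤ f x} := by
      refine convexHull_min (fun u hu => ?_) (convex_halfSpace_le hf (f x))
      simp only [Set.mem_setOf_eq]
      rcases eq_or_ne u x with rfl | h
      · exact le_rfl
      · exact (hsep u hu h).le
    have huniq : ∀ y ∈ convexHull ℝ S, f y = f x → y = x := by
      intro y hy hfy
      have hins : S = insert x (S \ {x}) := by
        rw [Set.insert_diff_singleton, Set.insert_eq_self.2 hx]
      rw [hins, convexHull_insert hS] at hy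
      rw [mem_convexJoin] at hy
      obtain ⟨x', hx', z, hz, a, b, ha, hb, hab, habz⟩ := hy
      rw [Set.mem_singleton_iff] at hx'
      rw [hx'] at habz
      have hfz : f z < f x := hhull hz
      have hfy2 : f y = a * f x + b * f z := by
        rw [← habz, hf.map_add, hf.map_smul, hf.map_smul]; simp [smul_eq_mul]
      have hb0 : b = 0 := by
        by_contra hb0
        have hbpos : 0 < b := lt_of_le_of_ne hb (Ne.symm hb0)
        have h6 := mul_lt_mul_of_pos_left hfz hbpos
        have h5 : a * f x + b * f x = f x := by rw [← add_mul, hab, one_mul]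
        linarith
      have ha1 : a = 1 := by linarith
      rw [← habz, hb0, ha1]; simp
    rw [mem_extremePoints_iff_forall_segment]
    refine ⟨subset_convexHull ℝ S hx, ?_⟩
    intro x₁ hx₁ x₂ hx₂ hseg
    obtain ⟨a, b, ha, hb, hab, habx⟩ := hseg
    have h1 : f x₁ ≤ f x := hSle hx₁
    have h2 : f x₂ ≤ f x := hSle hx₂
    have hfx : a * f x₁ + b * f x₂ = f x := by
      rw [← habx, hf.map_add, hf.map_smul, hf.map_smul]; simp [smul_eq_mul]
    rcases eq_or_lt_of_le h1 with he | hlt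
    · exact Or.inl (huniq x₁ hx₁ he)
    · have ha0 : a = 0 := by
        rcases eq_or_lt_of_le ha with h | hpos
        · exact h.symm
        · have h3 := mul_lt_mul_of_pos_left hlt hpos
          have h4 := mul_le_mul_of_nonneg_left h2 hb
          have h5 : a * f x + b * f x = f x := by rw [← add_mul, hab, one_mul]
          linarith
      have hb1 : b = 1 := by linarith
      right
      rw [← habx, ha0, hb1]; simp
  · have hSx : S = {x} := by
      rw [Set.not_nonempty_iff_eq_empty, Set.diff_eq_empty] at hS
      exact Set.Subset.antisymm hS (by simpa using hx)
    rw [hSx, convexHull_singleton]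
    rw [mem_extremePoints_iff_forall_segment]
    exact ⟨rfl, fun x₁ h1 x₂ h2 _ => Or.inl h1⟩

variable {d}

/-- Coordinates of points of `𝒱` lie in `{0, 1/2, 1}`. -/
lemma vSet_coords {u : Fin d → ℝ} (hu : u ∈ vSet d) :
    ∀ i, u i = 0 ∨ u i = 1/2 ∨ u i = 1 := by
  rcases hu with h | h
  · exact h.1.1
  · intro i; rcases h.1 i with h0 | h1
    · exact Or.inl h0
    · exact Or.inr (Or.inr h1)

lemma coords_nonneg {u : Fin d → ℝ} (hu : ∀ i, u i = 0 ∨ u i = 1/2 ∨ u i = 1) (i : Fin d) :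
    0 ≤ u i := by rcases hu i with h | h | h <;> rw [h] <;> norm_num

lemma coords_le_one {u : Fin d → ℝ} (hu : ∀ i, u i = 0 ∨ u i = 1/2 ∨ u i = 1) (i : Fin d) :
    u i ≤ 1 := by rcases hu i with h | h | h <;> rw [h] <;> norm_num

lemma sum_le_card {s : Finset (Fin d)} {u : Fin d → ℝ} (h : ∀ i ∈ s, u i ≤ 1) :
    ∑ i ∈ s, u i ≤ s.card :=
  le_trans (Finset.sum_le_sum h) (by simp)

/-- Three-way splitting of a sum according to the values of `v`. -/
lemma tri_sum {v : Fin d → ℝ} (hv : ∀ i, v i = 0 ∨ v i = 1/2 ∨ v i = 1) (F : Fin d → ℝ) :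
    ∑ i, F i = ∑ i ∈ Finset.univ.filter (fun i => v i = 1), F i
      + ∑ i ∈ Finset.univ.filter (fun i => v i = 0), F i
      + ∑ i ∈ Finset.univ.filter (fun i => v i = 1/2), F i := by
  have key : ∀ i, F i = (if v i = 1 then F i else 0) + (if v i = 0 then F i else 0)
      + (if v i = 1/2 then F i else 0) := by
    intro i; rcases hv i with h | h | h <;> rw [h] <;> norm_num
  rw [Finset.sum_congr rfl (fun i _ => key i), Finset.sum_add_distrib, Finset.sum_add_distrib,
    ← Finset.sum_filter, ← Finset.sum_filter, ← Finset.sum_filter]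

/-- Sum of coordinates of a cube vertex equals the number of `1` coordinates. -/
lemma cube_sum {u : Fin d → ℝ} (hu : ∀ i, u i = 0 ∨ u i = 1) :
    ∑ i, u i = ((Finset.univ.filter fun i => u i = 1).card : ℝ) := by
  rw [← Finset.sum_boole]
  refine Finset.sum_congr rfl fun i _ => ?_
  rcases hu i with h | h <;> rw [h] <;> norm_num

lemma sepA {m : ℕ} (hm : d = 2*m+1) {v : Fin d → ℝ}
    (hv : v ∈ cubeVerts d ∩ slabL d) :
    ∃ a : Fin d → ℝ, ∀ u ∈ vSet d, u ≠ v → ∑ i, a i * u i < ∑ i, a i * v i := by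
  classical
  obtain ⟨hvc, hvL⟩ := hv
  set P : Finset (Fin d) := Finset.univ.filter (fun i => v i = 1) with hP
  set Q : Finset (Fin d) := Finset.univ.filter (fun i => ¬ v i = 1) with hQ
  set s : ℕ := P.card with hs
  refine ⟨fun i => if v i = 1 then 1 else -1, ?_⟩
  have hsplit : ∀ w : Fin d → ℝ,
      ∑ i, (if v i = 1 then (1:ℝ) else -1) * w i = ∑ i ∈ P, w i - ∑ i ∈ Q, w i := by
    intro w
    rw [← Finset.sum_filter_add_sum_filter_not Finset.univ (fun i => v i = 1)
      (fun i => (if v i = 1 then (1:ℝ) else -1) * w i)]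
    rw [show Finset.univ.filter (fun i => v i = 1) = P from rfl,
        show Finset.univ.filter (fun i => ¬ v i = 1) = Q from rfl]
    have h1 : ∑ i ∈ P, (if v i = 1 then (1:ℝ) else -1) * w i = ∑ i ∈ P, w i := by
      refine Finset.sum_congr rfl fun i hi => ?_
      rw [if_pos (Finset.mem_filter.1 hi).2, one_mul]
    have h2 : ∑ i ∈ Q, (if v i = 1 then (1:ℝ) else -1) * w i = -∑ i ∈ Q, w i := by
      rw [← Finset.sum_neg_distrib]
      refine Finset.sum_congr rfl fun i hi => ?_
      rw [if_neg (Finset.mem_filter.1 hi).2]; ring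
    rw [h1, h2]; ring
  have hvP : ∀ i ∈ P, v i = 1 := fun i hi => (Finset.mem_filter.1 hi).2
  have hvQ : ∀ i ∈ Q, v i = 0 := by
    intro i hi
    rcases hvc i with h | h
    · exact h
    · exact absurd h (Finset.mem_filter.1 hi).2
  have hlv : ∑ i, (if v i = 1 then (1:ℝ) else -1) * v i = s := by
    rw [hsplit]
    rw [Finset.sum_congr rfl hvP, Finset.sum_congr rfl hvQ]
    simp [hs]
  have hsumv : ∑ i, v i = (s:ℝ) := cube_sum (by intro i; rcases hvc i with h | h <;> simp [h])
  -- bounds on s from v ∈ L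
  have hcast1 : ((d:ℝ) - 1)/2 = (m:ℝ) := by subst hm; push_cast; ring
  have hcast2 : ((d:ℝ) + 1)/2 = (m:ℝ) + 1 := by subst hm; push_cast; ring
  have hsl : (m:ℝ) ≤ s ∧ (s:ℝ) ≤ m + 1 := by
    obtain ⟨h1, h2⟩ := hvL
    rw [hcast1, hcast2, hsumv] at *
    exact ⟨h1, h2⟩
  intro u hu hne
  rw [hlv, hsplit]
  have hucoords := vSet_coords hu
  have hQnonneg : (0:ℝ) ≤ ∑ i ∈ Q, u i :=
    Finset.sum_nonneg fun i _ => coords_nonneg hucoords i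
  have hPle : ∑ i ∈ P, u i ≤ (s:ℝ) := sum_le_card fun i _ => coords_le_one hucoords i
  rcases hu with huC | huB
  · -- u is a center not in L
    by_cases hz : ∀ i ∈ Q, u i = 0
    · have hQ0 : ∑ i ∈ Q, u i = 0 := Finset.sum_eq_zero hz
      have hsumu : ∑ i, u i = ∑ i ∈ P, u i := by
        rw [← Finset.sum_filter_add_sum_filter_not Finset.univ (fun i => v i = 1) u]
        rw [show Finset.univ.filter (fun i => v i = 1) = P from rfl,
            show Finset.univ.filter (fun i => ¬ v i = 1) = Q from rfl, hQ0, add_zero]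
      have hnotL : ¬ ((m:ℝ) ≤ ∑ i, u i ∧ (∑ i, u i) ≤ m + 1) := by
        intro hcon
        exact huC.2 ⟨by rw [hcast1]; exact hcon.1, by rw [hcast2]; exact hcon.2⟩
      rw [not_and_or, not_le, not_le] at hnotL
      rcases hnotL with h | h
      · rw [hsumu] at h; linarith [hsl.1]
      · rw [hsumu] at h; linarith [hsl.2, hPle]
    · push_neg at hz
      obtain ⟨i₀, hi₀Q, hi₀⟩ := hz
      have hhalf : (1:ℝ)/2 ≤ u i₀ := by
        rcases hucoords i₀ with h | h | h
        · exact absurd h hi₀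
        · rw [h]
        · rw [h]; norm_num
      have : (1:ℝ)/2 ≤ ∑ i ∈ Q, u i := by
        calc (1:ℝ)/2 ≤ u i₀ := hhalf
        _ ≤ ∑ i ∈ Q, u i :=
          Finset.single_le_sum (fun i _ => coords_nonneg hucoords i) hi₀Q
      linarith
  · -- u is a cube vertex in L, u ≠ v
    obtain ⟨i₀, hi₀⟩ := Function.ne_iff.1 hne
    rcases hvc i₀ with h0 | h1
    · -- v i₀ = 0, so u i₀ = 1 and i₀ ∈ Q
      have hu1 : u i₀ = 1 := by
        rcases huB.1 i₀ with h | h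
        · exact absurd (h.trans h0.symm) hi₀
        · exact h
      have hi₀Q : i₀ ∈ Q := by
        rw [hQ, Finset.mem_filter]
        exact ⟨Finset.mem_univ _, by rw [h0]; norm_num⟩
      have : (1:ℝ) ≤ ∑ i ∈ Q, u i := by
        calc (1:ℝ) = u i₀ := hu1.symm
        _ ≤ ∑ i ∈ Q, u i :=
          Finset.single_le_sum (fun i _ => coords_nonneg hucoords i) hi₀Q
      linarith
    · -- v i₀ = 1, so u i₀ = 0 and i₀ ∈ P
      have hu0 : u i₀ = 0 := by
        rcases huB.1 i₀ with h | h
        · exact h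
        · exact absurd (h.trans h1.symm) hi₀
      have hi₀P : i₀ ∈ P := by
        rw [hP, Finset.mem_filter]; exact ⟨Finset.mem_univ _, h1⟩
      have herase : ∑ i ∈ P, u i ≤ (s:ℝ) - 1 := by
        rw [← Finset.sum_erase_add P u hi₀P, hu0, add_zero]
        have h1' : ∑ i ∈ P.erase i₀, u i ≤ ((P.erase i₀).card : ℝ) :=
          sum_le_card fun i _ => coords_le_one hucoords i
        have h2' : (P.erase i₀).card = s - 1 := by rw [Finset.card_erase_of_mem hi₀P]
        have h3' : 1 ≤ s := Finset.card_pos.2 ⟨i₀, hi₀P⟩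
        rw [h2'] at h1'
        rw [Nat.cast_sub h3'] at h1'
        simpa using h1'
      linarith

lemma sepB {m : ℕ} (hm : d = 2*m+1) {v : Fin d → ℝ}
    (hv : v ∈ centerSet d \ slabL d) :
    ∃ a : Fin d → ℝ, ∀ u ∈ vSet d, u ≠ v → ∑ i, a i * u i < ∑ i, a i * v i := by
  classical
  obtain ⟨hvC, hvL⟩ := hv
  have hvcoords := hvC.1
  set P1 : Finset (Fin d) := Finset.univ.filter (fun i => v i = 1) with hP1
  set P0 : Finset (Fin d) := Finset.univ.filter (fun i => v i = 0) with hP0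
  set Ph : Finset (Fin d) := Finset.univ.filter (fun i => v i = 1/2) with hPh
  set k : ℕ := P1.card with hk
  have hPhcard : Ph.card = m := by
    have h1 : {i | v i = (1:ℝ)/2} = ↑Ph := by ext i; simp [hPh]
    have h2 := hvC.2
    rw [h1, Set.ncard_coe_finset] at h2
    omega
  set M : ℝ := 3*(m:ℝ)+1 with hM
  set σ : ℝ := if 2*k < m then -1 else 1 with hσ
  have hMpos : (0:ℝ) < M := by positivity
  have hσcases : σ = -1 ∨ σ = 1 := by
    rw [hσ]; split <;> simp
  refine ⟨fun i => if v i = 1 then M else if v i = 0 then -M else σ, ?_⟩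
  have hsplit : ∀ w : Fin d → ℝ,
      ∑ i, (if v i = 1 then M else if v i = 0 then -M else σ) * w i
        = M * ∑ i ∈ P1, w i - M * ∑ i ∈ P0, w i + σ * ∑ i ∈ Ph, w i := by
    intro w
    rw [tri_sum hvcoords]
    have h1 : ∑ i ∈ P1, (if v i = 1 then M else if v i = 0 then -M else σ) * w i
        = M * ∑ i ∈ P1, w i := by
      rw [Finset.mul_sum]
      refine Finset.sum_congr rfl fun i hi => ?_
      rw [if_pos (Finset.mem_filter.1 hi).2]
    have h2 : ∑ i ∈ P0, (if v i = 1 then M else if v i = 0 then -M else σ) * w i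
        = -(M * ∑ i ∈ P0, w i) := by
      rw [Finset.mul_sum, ← Finset.sum_neg_distrib]
      refine Finset.sum_congr rfl fun i hi => ?_
      have h0 := (Finset.mem_filter.1 hi).2
      rw [if_neg (by rw [h0]; norm_num), if_pos h0]; ring
    have h3 : ∑ i ∈ Ph, (if v i = 1 then M else if v i = 0 then -M else σ) * w i
        = σ * ∑ i ∈ Ph, w i := by
      rw [Finset.mul_sum]
      refine Finset.sum_congr rfl fun i hi => ?_
      have hh := (Finset.mem_filter.1 hi).2
      rw [if_neg (by rw [hh]; norm_num), if_neg (by rw [hh]; norm_num)]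
    rw [h1, h2, h3]; ring
  have hvP1 : ∀ i ∈ P1, v i = 1 := fun i hi => (Finset.mem_filter.1 hi).2
  have hvP0 : ∀ i ∈ P0, v i = 0 := fun i hi => (Finset.mem_filter.1 hi).2
  have hvPh : ∀ i ∈ Ph, v i = 1/2 := fun i hi => (Finset.mem_filter.1 hi).2
  have hsum1v : ∑ i ∈ P1, v i = (k:ℝ) := by rw [Finset.sum_congr rfl hvP1]; simp [hk]
  have hsum0v : ∑ i ∈ P0, v i = 0 := by rw [Finset.sum_congr rfl hvP0]; simp
  have hsumhv : ∑ i ∈ Ph, v i = (m:ℝ)/2 := by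
    rw [Finset.sum_congr rfl hvPh, Finset.sum_const, hPhcard, nsmul_eq_mul]; ring
  have hlv : ∑ i, (if v i = 1 then M else if v i = 0 then -M else σ) * v i
      = M * k + σ * ((m:ℝ)/2) := by
    rw [hsplit, hsum1v, hsum0v, hsumhv]; ring
  have hsumv : ∑ i, v i = (k:ℝ) + (m:ℝ)/2 := by
    rw [tri_sum hvcoords v, hsum1v, hsum0v, hsumhv]; ring
  have hcast1 : ((d:ℝ) - 1)/2 = (m:ℝ) := by subst hm; push_cast; ring
  have hcast2 : ((d:ℝ) + 1)/2 = (m:ℝ) + 1 := by subst hm; push_cast; ring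
  -- v not in L:
  have hknotin : (k:ℝ) + (m:ℝ)/2 < m ∨ (m:ℝ) + 1 < (k:ℝ) + (m:ℝ)/2 := by
    have := hvL
    rw [slabL, Set.mem_setOf_eq, hcast1, hcast2, hsumv, not_and_or, not_le, not_le] at this
    exact this
  have hkcases : 2*k < m ∨ m + 2 < 2*k := by
    rcases hknotin with h | h
    · left; have : 2*(k:ℝ) < m := by linarith
      exact_mod_cast this
    · right; have : (m:ℝ) + 2 < 2*(k:ℝ) := by linarith
      exact_mod_cast this
  clear_value P1 P0 Ph k M σ
  intro u hu hne
  rw [hlv, hsplit]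
  have hucoords := vSet_coords hu
  have hS1le : ∑ i ∈ P1, u i ≤ (k:ℝ) := by
    rw [hk]; exact sum_le_card fun i _ => coords_le_one hucoords i
  have hS0nonneg : (0:ℝ) ≤ ∑ i ∈ P0, u i :=
    Finset.sum_nonneg fun i _ => coords_nonneg hucoords i
  have hShnonneg : (0:ℝ) ≤ ∑ i ∈ Ph, u i :=
    Finset.sum_nonneg fun i _ => coords_nonneg hucoords i
  have hShle : ∑ i ∈ Ph, u i ≤ (m:ℝ) := by
    have := sum_le_card (s := Ph) (u := u) fun i _ => coords_le_one hucoords i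
    rwa [hPhcard] at this
  by_cases hfix : (∀ i ∈ P1, u i = 1) ∧ (∀ i ∈ P0, u i = 0)
  · have hS1 : ∑ i ∈ P1, u i = (k:ℝ) := by rw [Finset.sum_congr rfl hfix.1, hk]; simp
    have hS0 : ∑ i ∈ P0, u i = 0 := Finset.sum_eq_zero hfix.2
    rcases hu with huC | huB
    · -- u is a center: then u = v, contradiction
      exfalso
      apply hne
      have hsub : {i | u i = (1:ℝ)/2} ⊆ {i | v i = (1:ℝ)/2} := by
        intro i hi
        simp only [Set.mem_setOf_eq] at hi ⊢
        rcases hvcoords i with h | h | h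
        · have : i ∈ P0 := by rw [hP0, Finset.mem_filter]; exact ⟨Finset.mem_univ _, h⟩
          rw [hfix.2 i this] at hi; norm_num at hi
        · exact h
        · have : i ∈ P1 := by rw [hP1, Finset.mem_filter]; exact ⟨Finset.mem_univ _, h⟩
          rw [hfix.1 i this] at hi; norm_num at hi
      have hcardeq : {i | v i = (1:ℝ)/2}.ncard ≤ {i | u i = (1:ℝ)/2}.ncard := by
        rw [hvC.2, huC.1.2]
      have heq := Set.eq_of_subset_of_ncard_le hsub hcardeq (Set.toFinite _)
      funext i
      rcases hvcoords i with h | h | h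
      · rw [h]
        exact hfix.2 i (by rw [hP0, Finset.mem_filter]; exact ⟨Finset.mem_univ _, h⟩)
      · rw [h]
        have : i ∈ {i | u i = (1:ℝ)/2} := by rw [heq]; exact h
        exact this
      · rw [h]
        exact hfix.1 i (by rw [hP1, Finset.mem_filter]; exact ⟨Finset.mem_univ _, h⟩)
    · -- u is a cube vertex in L
      have hsumu : ∑ i, u i = (k:ℝ) + ∑ i ∈ Ph, u i := by
        rw [tri_sum hvcoords u, ← hP1, ← hP0, ← hPh, hS1, hS0]; ring
      obtain ⟨hL1, hL2⟩ := huB.2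
      rw [hcast1, hsumu] at hL1
      rw [hcast2, hsumu] at hL2
      rw [hS1, hS0]
      rcases hkcases with hsm | hbg
      · have hσval : σ = -1 := by rw [hσ, if_pos hsm]
        have h2k : 2*(k:ℝ) < m := by exact_mod_cast hsm
        rw [hσval]
        have : (m:ℝ)/2 < ∑ i ∈ Ph, u i := by linarith
        nlinarith
      · have hσval : σ = 1 := by rw [hσ, if_neg (by omega)]
        have h2k : (m:ℝ) + 2 < 2*(k:ℝ) := by exact_mod_cast hbg
        rw [hσval]
        have : ∑ i ∈ Ph, u i < (m:ℝ)/2 := by linarith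
        nlinarith
  · -- some coordinate on P1 ∪ P0 deviates: gap of at least M/2
    have hgap : ∑ i ∈ P1, u i - ∑ i ∈ P0, u i ≤ (k:ℝ) - 1/2 := by
      rw [not_and_or] at hfix
      rcases hfix with h | h
      · push_neg at h
        obtain ⟨i₀, hi₀P, hi₀⟩ := h
        have hle : u i₀ ≤ 1/2 := by
          rcases hucoords i₀ with h' | h' | h'
          · rw [h']; norm_num
          · rw [h']
          · exact absurd h' hi₀
        have herase : ∑ i ∈ P1, u i ≤ (k:ℝ) - 1/2 := by
          rw [← Finset.sum_erase_add P1 u hi₀P]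
          have h1' : ∑ i ∈ P1.erase i₀, u i ≤ ((P1.erase i₀).card : ℝ) :=
            sum_le_card fun i _ => coords_le_one hucoords i
          have h2' : (P1.erase i₀).card = k - 1 := by
            rw [Finset.card_erase_of_mem hi₀P, hk]
          have h3' : 1 ≤ k := by rw [hk]; exact Finset.card_pos.2 ⟨i₀, hi₀P⟩
          rw [h2', Nat.cast_sub h3'] at h1'
          push_cast at h1' ⊢
          linarith
        linarith
      · push_neg at h
        obtain ⟨i₀, hi₀P, hi₀⟩ := h
        have hge : (1:ℝ)/2 ≤ u i₀ := by
          rcases hucoords i₀ with h' | h' | h'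
          · exact absurd h' hi₀
          · rw [h']
          · rw [h']; norm_num
        have : (1:ℝ)/2 ≤ ∑ i ∈ P0, u i :=
          le_trans hge (Finset.single_le_sum (fun i _ => coords_nonneg hucoords i) hi₀P)
        linarith
    have hshbound : σ * ∑ i ∈ Ph, u i ≤ (m:ℝ) := by
      rcases hσcases with h | h <;> rw [h] <;> nlinarith
    have hmain : M * (∑ i ∈ P1, u i - ∑ i ∈ P0, u i) ≤ M * ((k:ℝ) - 1/2) :=
      mul_le_mul_of_nonneg_left hgap hMpos.le
    have hm0 : (0:ℝ) ≤ (m:ℝ)/2 := by positivity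
    have hvlb : -((m:ℝ)/2) ≤ σ * ((m:ℝ)/2) := by
      rcases hσcases with h | h <;> rw [h] <;> linarith
    have hexp1 : M * (∑ i ∈ P1, u i - ∑ i ∈ P0, u i)
        = M * ∑ i ∈ P1, u i - M * ∑ i ∈ P0, u i := by ring
    have hexp2 : M * ((k:ℝ) - 1/2) = M * (k:ℝ) - M/2 := by ring
    rw [hexp1, hexp2] at hmain
    have hMval : M = 3*(m:ℝ)+1 := hM
    linarith [hmain, hshbound, hvlb, hMval]

variable (d)

/-- For `d ≥ 3` with both `d` and `(d-1)/2` odd, the set of extreme points of `Ξ`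
is exactly `𝒱`. -/
theorem extremePoints_Xi (hd : 3 ≤ d) (hodd : Odd d) (hodd' : Odd ((d - 1) / 2)) :
    Set.extremePoints ℝ (Xi d) = vSet d := by
  obtain ⟨m, hmm⟩ := hodd
  have hm' : d = 2*m+1 := by omega
  rw [Xi]
  apply Set.Subset.antisymm
  · exact extremePoints_convexHull_subset
  · intro v hv
    obtain ⟨a, ha⟩ : ∃ a : Fin d → ℝ, ∀ u ∈ vSet d, u ≠ v →
        ∑ i, a i * u i < ∑ i, a i * v i := by
      rcases hv with h | h
      · exact sepB hm' h
      · exact sepA hm' h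
    have hlin : IsLinearMap ℝ (fun x : Fin d → ℝ => ∑ i, a i * x i) := by
      constructor
      · intro x y; simp [mul_add, Finset.sum_add_distrib]
      · intro c x
        simp only [Pi.smul_apply, smul_eq_mul, Finset.mul_sum]
        exact Finset.sum_congr rfl fun i _ => by ring
    exact mem_extremePoints_of_max hlin hv ha
end
end

section
/- Let d ≥ 3 be an integer such that both d and (d−1)/2 are odd (so that (d+1)/4 is an integer). Then the number of points in 𝒞∖L is C(d,(d−1)/2) · ( 2^{(d+1)/2} − C((d+1)/2,(d+1)/4) ), where C(·,·) denotes the binomial coefficient. -/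
open Set Pointwise

noncomputable section

variable (d : ℕ)

lemma key (d : ℕ) (s : Finset (Fin d)) (p : ℕ → Prop) [DecidablePred p] :
    (Finset.univ.filter (fun g : Fin d → Fin 3 =>
        Finset.univ.filter (fun i => g i = 1) = s ∧ p ((Finset.univ.filter (fun i => g i = 2)).card))).card
      = (sᶜ.powerset.filter (fun u => p u.card)).card := by
  apply Finset.card_bij' (fun g _ => Finset.univ.filter (fun i => g i = 2))
    (fun u _ => fun i => if i ∈ s then 1 else if i ∈ u then 2 else 0)
  -- left inverse: g roundtrip
  · intro g hg
    simp only [Finset.mem_filter, Finset.mem_univ, true_and] at hg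
    funext i
    by_cases his : i ∈ s
    · rw [if_pos his]
      rw [← hg.1] at his
      simp only [Finset.mem_filter, Finset.mem_univ, true_and] at his
      exact his.symm
    · rw [if_neg his]
      rw [← hg.1] at his
      simp only [Finset.mem_filter, Finset.mem_univ, true_and] at his
      by_cases h2 : g i = 2
      · simp [h2]
      · rw [if_neg (by simp only [Finset.mem_filter, Finset.mem_univ, true_and]; exact h2)]
        have := (g i).isLt
        have h1 : (g i).val ≠ 1 := fun h => his (Fin.ext h)
        have h2' : (g i).val ≠ 2 := fun h => h2 (Fin.ext h)
        exact (Fin.ext (by omega)).symm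
  -- right inverse: u roundtrip
  · intro u hu
    simp only [Finset.mem_filter, Finset.mem_powerset] at hu
    ext i
    simp only [Finset.mem_filter, Finset.mem_univ, true_and]
    by_cases his : i ∈ s
    · rw [if_pos his]
      constructor
      · intro h; exact absurd h (by decide)
      · intro h
        have := hu.1 h
        simp [his] at this
    · rw [if_neg his]
      by_cases hiu : i ∈ u
      · simp [hiu]
      · simp [hiu]
  -- maps into target
  · intro g hg
    simp only [Finset.mem_filter, Finset.mem_univ, true_and] at hg ⊢
    refine ⟨?_, hg.2⟩
    rw [Finset.mem_powerset]
    intro i hi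
    simp only [Finset.mem_filter, Finset.mem_univ, true_and] at hi
    simp only [Finset.mem_compl]
    intro his
    rw [← hg.1] at his
    simp only [Finset.mem_filter, Finset.mem_univ, true_and] at his
    rw [his] at hi
    exact absurd hi (by decide)
  -- inverse maps into source
  · intro u hu
    simp only [Finset.mem_filter, Finset.mem_powerset, Finset.mem_univ, true_and] at hu ⊢
    obtain ⟨hsub, hp⟩ := hu
    have hdisj : ∀ i ∈ u, i ∉ s := fun i hi => by
      have := hsub hi; simpa using this
    constructor
    · ext i
      simp only [Finset.mem_filter, Finset.mem_univ, true_and]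
      constructor
      · intro h
        by_contra his
        rw [if_neg his] at h
        split_ifs at h <;> simp_all
      · intro his; rw [if_pos his]
    · convert hp using 2
      ext i
      simp only [Finset.mem_filter, Finset.mem_univ, true_and]
      by_cases his : i ∈ s
      · rw [if_pos his]
        constructor
        · intro h; exact absurd h (by decide)
        · intro h; exact (hdisj i h his).elim
      · rw [if_neg his]
        by_cases hiu : i ∈ u
        · simp [hiu]
        · simp [hiu]

lemma countGen (d m : ℕ) (p : ℕ → Prop) [DecidablePred p] (c : ℕ)
    (hc : ∀ s : Finset (Fin d), s.card = m → ((sᶜ.powerset.filter (fun u => p u.card)).card = c)) :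
    (Finset.univ.filter (fun g : Fin d → Fin 3 =>
        (Finset.univ.filter (fun i => g i = 1)).card = m ∧
          p ((Finset.univ.filter (fun i => g i = 2)).card))).card = d.choose m * c := by
  rw [Finset.card_eq_sum_card_fiberwise (f := fun g => Finset.univ.filter (fun i => g i = 1))
      (t := Finset.powersetCard m Finset.univ)
      (fun g hg => by
        rw [Finset.mem_coe, Finset.mem_powersetCard_univ]
        exact (Finset.mem_filter.mp (Finset.mem_coe.mp hg)).2.1)]
  have step : ∀ s ∈ Finset.powersetCard m (Finset.univ : Finset (Fin d)),
      ((Finset.univ.filter (fun g : Fin d → Fin 3 =>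
          (Finset.univ.filter (fun i => g i = 1)).card = m ∧
            p ((Finset.univ.filter (fun i => g i = 2)).card))).filter
        (fun g => Finset.univ.filter (fun i => g i = 1) = s)).card = c := by
    intro s hs
    rw [Finset.mem_powersetCard_univ] at hs
    have e : (Finset.univ.filter (fun g : Fin d → Fin 3 =>
          (Finset.univ.filter (fun i => g i = 1)).card = m ∧
            p ((Finset.univ.filter (fun i => g i = 2)).card))).filter
        (fun g => Finset.univ.filter (fun i => g i = 1) = s)
        = Finset.univ.filter (fun g : Fin d → Fin 3 =>
            Finset.univ.filter (fun i => g i = 1) = s ∧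
              p ((Finset.univ.filter (fun i => g i = 2)).card)) := by
      rw [Finset.filter_filter]
      ext g
      simp only [Finset.mem_filter, Finset.mem_univ, true_and]
      constructor
      · rintro ⟨⟨h1, h2⟩, h3⟩; exact ⟨h3, h2⟩
      · rintro ⟨h3, h2⟩; exact ⟨⟨by rw [h3, hs], h2⟩, h3⟩
    rw [e, key d s p, hc s hs]
  rw [Finset.sum_congr rfl step, Finset.sum_const, Finset.card_powersetCard,
    Finset.card_univ, Fintype.card_fin, smul_eq_mul]

lemma sumval (d : ℕ) (g : Fin d → Fin 3) :
    ∑ i, ((g i : ℕ)) = (Finset.univ.filter (fun i => g i = 1)).card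
      + 2 * (Finset.univ.filter (fun i => g i = 2)).card := by
  rw [Finset.card_filter, Finset.card_filter, Finset.mul_sum, ← Finset.sum_add_distrib]
  apply Finset.sum_congr rfl
  intro i _
  have h := (g i).isLt
  split_ifs with h1 h2 h3
  · exact absurd (h1 ▸ h2) (by decide)
  · simp [h1]
  · simp [h3]
  · have v1 : (g i).val ≠ 1 := fun h => h1 (Fin.ext h)
    have v2 : (g i).val ≠ 2 := fun h => h3 (Fin.ext h)
    omega

set_option maxHeartbeats 1600000 in
/-- For `d ≥ 3` with both `d` and `(d-1)/2` odd, the number of points in `𝒞 ∖ L` is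
`C(d,(d-1)/2) · (2^{(d+1)/2} − C((d+1)/2,(d+1)/4))`. -/
theorem card_centerSet_diff_slab (hd : 3 ≤ d) (hodd : Odd d) (hodd' : Odd ((d - 1) / 2)) :
    ((centerSet d \ slabL d).ncard : ℤ) =
      (d.choose ((d - 1) / 2) : ℤ) *
        ((2 : ℤ) ^ ((d + 1) / 2) - (((d + 1) / 2).choose ((d + 1) / 4) : ℤ)) := by

  classical
  obtain ⟨k, hk⟩ := hodd
  obtain ⟨a, ha⟩ := hodd'
  set m := (d - 1) / 2 with hm
  set t0 := (d + 1) / 4 with ht0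
  have hdm : d = 2 * m + 1 := by omega
  have hma : m = 2 * a + 1 := ha
  have ht0a : t0 = a + 1 := by omega
  have hn : d - m = (d + 1) / 2 := by omega
  set f : (Fin d → Fin 3) → (Fin d → ℝ) := fun g i => ((g i : ℕ) : ℝ) / 2 with hf
  have hinj : Function.Injective f := by
    intro g g' h
    funext i
    have h2 := congrFun h i
    simp only [hf] at h2
    have h3 : ((g i : ℕ) : ℝ) = ((g' i : ℕ) : ℝ) := by linarith
    exact Fin.ext (by exact_mod_cast h3)
  set T : Finset (Fin d → Fin 3) := Finset.univ.filter (fun g =>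
      (Finset.univ.filter (fun i => g i = 1)).card = m ∧
        (Finset.univ.filter (fun i => g i = 2)).card ≠ t0) with hT
  have hval : ∀ (g : Fin d → Fin 3) (i), g i = 0 ∨ g i = 1 ∨ g i = 2 := by
    intro g i
    have hlt := (g i).isLt
    have h0 : (g i).val = 0 ∨ (g i).val = 1 ∨ (g i).val = 2 := by omega
    rcases h0 with h | h | h
    exacts [Or.inl (Fin.ext h), Or.inr (Or.inl (Fin.ext h)), Or.inr (Or.inr (Fin.ext h))]
  have hsum : ∀ g : Fin d → Fin 3, ∑ i, f g i = ((∑ i, ((g i : ℕ)) : ℕ) : ℝ) / 2 := by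
    intro g
    rw [← Finset.sum_div]
    congr 1
    push_cast
    rfl
  have himg : centerSet d \ slabL d = f '' ↑T := by
    ext x
    simp only [centerSet, slabL, Set.mem_diff, Set.mem_setOf_eq, Set.mem_image,
      Finset.mem_coe]
    constructor
    · rintro ⟨⟨hvals, hcard⟩, hns⟩
      set g : Fin d → Fin 3 := fun i => if x i = 0 then 0 else if x i = 1/2 then 1 else 2
        with hg
      have hfg : f g = x := by
        funext i
        rcases hvals i with h | h | h <;> simp [hf, hg, h] <;> norm_num
      have hfib : ∀ i, g i = 1 ↔ x i = 1/2 := by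
        intro i
        rcases hvals i with h | h | h <;> simp [hg, h] <;> norm_num
      have hcard1 : (Finset.univ.filter (fun i => g i = 1)).card = m := by
        rw [hm, ← hcard]
        have e : {i | x i = 1/2} = ↑(Finset.univ.filter (fun i => g i = 1)) := by
          ext i; simp [hfib]
        rw [e, Set.ncard_coe_finset]
      have hcard2 : (Finset.univ.filter (fun i => g i = 2)).card ≠ t0 := by
        intro hteq
        apply hns
        have hs := hsum g
        rw [hfg] at hs
        have hNe : ∑ i, ((g i : ℕ)) = m + 2 * t0 := by
          rw [sumval, hcard1, hteq]
        have hNd : ∑ i, ((g i : ℕ)) = d := by omega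
        rw [hNd] at hs
        constructor
        · rw [hs]
          have h1d : (1:ℝ) ≤ (d:ℝ) := by exact_mod_cast Nat.one_le_of_lt hd
          linarith
        · rw [hs]
          linarith
      exact ⟨g, Finset.mem_filter.mpr ⟨Finset.mem_univ g, hcard1, hcard2⟩, hfg⟩
    · rintro ⟨g, hgT, rfl⟩
      rw [hT, Finset.mem_filter] at hgT
      obtain ⟨-, hc1, hc2⟩ := hgT
      refine ⟨⟨?_, ?_⟩, ?_⟩
      · intro i
        rcases hval g i with h | h | h <;> simp [hf, h] <;> norm_num
      · have e : {i | f g i = 1/2} = ↑(Finset.univ.filter (fun i => g i = 1)) := by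
          ext i
          simp only [Finset.coe_filter, Finset.mem_univ, true_and, Set.mem_setOf_eq]
          rcases hval g i with h | h | h <;> simp [hf, h] <;> norm_num
        rw [show {i | (f g) i = 1/2} = {i | f g i = 1/2} from rfl, e,
          Set.ncard_coe_finset, hc1]
      · intro hmem
        obtain ⟨h1, h2⟩ := hmem
        rw [hsum g] at h1 h2
        set N := ∑ i, ((g i : ℕ)) with hN
        have hNe : N = m + 2 * (Finset.univ.filter (fun i => g i = 2)).card := by
          rw [hN, sumval, hc1]
        have n1 : d ≤ N + 1 := by
          have : (d : ℝ) ≤ (N : ℝ) + 1 := by linarith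
          exact_mod_cast this
        have n2 : N ≤ d + 1 := by
          have : (N : ℝ) ≤ (d : ℝ) + 1 := by linarith
          exact_mod_cast this
        exact hc2 (by omega)
  rw [himg, Set.ncard_image_of_injective _ hinj, Set.ncard_coe_finset]
  have hA : (Finset.univ.filter (fun g : Fin d → Fin 3 =>
      (Finset.univ.filter (fun i => g i = 1)).card = m ∧
        (fun _ : ℕ => True) ((Finset.univ.filter (fun i => g i = 2)).card))).card
      = d.choose m * 2 ^ (d - m) :=
    countGen d m (fun _ => True) _ (fun s hs => by
      simp [Finset.filter_true, Finset.card_powerset, Finset.card_compl, hs])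
  have hB : (Finset.univ.filter (fun g : Fin d → Fin 3 =>
      (Finset.univ.filter (fun i => g i = 1)).card = m ∧
        (Finset.univ.filter (fun i => g i = 2)).card = t0)).card
      = d.choose m * (d - m).choose t0 :=
    countGen d m (· = t0) _ (fun s hs => by
      rw [← Finset.powersetCard_eq_filter, Finset.card_powersetCard, Finset.card_compl,
        Fintype.card_fin, hs])
  have hApure : (Finset.univ.filter (fun g : Fin d → Fin 3 =>
      (Finset.univ.filter (fun i => g i = 1)).card = m)).card = d.choose m * 2 ^ (d - m) := by
    rw [← hA]
    congr 1
    apply Finset.filter_congr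
    intro g _
    simp
  have hsplit :
      (Finset.univ.filter (fun g : Fin d → Fin 3 =>
        (Finset.univ.filter (fun i => g i = 1)).card = m ∧
          (Finset.univ.filter (fun i => g i = 2)).card = t0)).card + T.card
      = (Finset.univ.filter (fun g : Fin d → Fin 3 =>
        (Finset.univ.filter (fun i => g i = 1)).card = m)).card := by
    have e1 : ((Finset.univ.filter (fun g : Fin d → Fin 3 =>
        (Finset.univ.filter (fun i => g i = 1)).card = m)).filter
          (fun g => (Finset.univ.filter (fun i => g i = 2)).card = t0))
        = Finset.univ.filter (fun g : Fin d → Fin 3 =>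
            (Finset.univ.filter (fun i => g i = 1)).card = m ∧
              (Finset.univ.filter (fun i => g i = 2)).card = t0) := by
      ext g
      simp only [Finset.mem_filter, Finset.mem_univ, true_and]
    have e2 : ((Finset.univ.filter (fun g : Fin d → Fin 3 =>
        (Finset.univ.filter (fun i => g i = 1)).card = m)).filter
          (fun g => ¬ (Finset.univ.filter (fun i => g i = 2)).card = t0)) = T := by
      rw [hT]
      ext g
      simp only [Finset.mem_filter, Finset.mem_univ, true_and, Ne]
    have h := Finset.card_filter_add_card_filter_not
      (s := Finset.univ.filter (fun g : Fin d → Fin 3 =>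
        (Finset.univ.filter (fun i => g i = 1)).card = m))
      (fun g => (Finset.univ.filter (fun i => g i = 2)).card = t0)
    have c1 := congrArg Finset.card e1
    have c2 := congrArg Finset.card e2
    rw [← c1, ← c2]
    exact h
  rw [hApure, hB] at hsplit
  have hfinal : (T.card : ℤ)
      = (d.choose m : ℤ) * 2 ^ (d - m) - (d.choose m : ℤ) * ((d - m).choose t0) := by
    have hz : ((d.choose m * (d - m).choose t0 : ℕ) : ℤ) + (T.card : ℤ)
        = ((d.choose m * 2 ^ (d - m) : ℕ) : ℤ) := by exact_mod_cast hsplit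
    push_cast at hz
    linarith
  rw [hfinal, ← hn]
  push_cast
  ring
end
end

section
/- There exists an integer d₀ such that for every integer d ≥ d₀ with both d and (d−1)/2 odd, the graph of the polytope Ξ has edge expansion strictly less than d/(√2)^d. -/
open Set Pointwise

noncomputable section

/-- The graph of a polytope `P`: vertices are the extreme points of `P`, and two distinct
extreme points are adjacent exactly when the closed segment between them is an extreme
subset (a face) of `P`. -/
def polyGraph {d : ℕ} (P : Set (Fin d → ℝ)) :
    SimpleGraph {x : Fin d → ℝ // x ∈ Set.extremePoints ℝ P} where
  Adj u v := u ≠ v ∧ IsExtreme ℝ P (segment ℝ u.1 v.1)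
  symm := by
    constructor
    rintro u v ⟨h1, h2⟩
    refine ⟨h1.symm, ?_⟩
    rwa [segment_symm]
  loopless := by constructor; rintro u ⟨h1, _⟩; exact h1 rfl

/-- The set `∂S` of edges of a graph with exactly one endpoint in `S`. -/
def edgeCut {V : Type*} (G : SimpleGraph V) (S : Set V) : Set (Sym2 V) :=
  {e | e ∈ G.edgeSet ∧ ∃ u v, u ∈ S ∧ v ∉ S ∧ e = s(u, v)}

variable (d : ℕ)

namespace XiAux

open Set

variable {d : ℕ}

/-- 0/1 indicator vector of a finset. -/
def ind (A : Finset (Fin d)) : Fin d → ℝ := fun i => if i ∈ A then 1 else 0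

/-- center vector: 1/2 on `Hs`, 1 on `Ks`, 0 elsewhere. -/
def cvec (Hs Ks : Finset (Fin d)) : Fin d → ℝ :=
  fun i => if i ∈ Hs then 1/2 else if i ∈ Ks then 1 else 0

lemma vSet_coords {x : Fin d → ℝ} (hx : x ∈ vSet d) (i : Fin d) :
    x i = 0 ∨ x i = 1/2 ∨ x i = 1 := by
  rcases hx with ⟨hc, -⟩ | ⟨hc, -⟩
  · exact hc.1 i
  · rcases hc i with h0 | h1
    · exact Or.inl h0
    · exact Or.inr (Or.inr h1)

lemma cube_convex : Convex ℝ {x : Fin d → ℝ | ∀ i, x i ∈ Icc (0:ℝ) 1} := by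
  intro x hx y hy a b ha hb hab
  intro i
  have h1 := hx i
  have h2 := hy i
  simp only [mem_Icc] at h1 h2 ⊢
  have : (a • x + b • y) i = a * x i + b * y i := by simp [smul_eq_mul]
  rw [this]
  constructor
  · nlinarith [h1.1, h2.1]
  · nlinarith [h1.2, h2.2]

lemma Xi_sub_cube : Xi d ⊆ {x : Fin d → ℝ | ∀ i, x i ∈ Icc (0:ℝ) 1} := by
  apply convexHull_min _ cube_convex
  intro x hx i
  rcases vSet_coords hx i with h | h | h <;> rw [h] <;> constructor <;> norm_num

lemma vSet_finite : (vSet d).Finite := by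
  have hfin : (Set.pi Set.univ (fun _ : Fin d => ({0, 1/2, 1} : Set ℝ))).Finite :=
    Set.Finite.pi (fun _ => (Set.finite_singleton 1).insert _ |>.insert _)
  apply hfin.subset
  intro x hx
  rw [Set.mem_univ_pi]
  intro i
  rcases vSet_coords hx i with h | h | h <;> simp [h]

lemma extremePoints_Xi_sub : Set.extremePoints ℝ (Xi d) ⊆ vSet d :=
  extremePoints_convexHull_subset

lemma extremePoints_Xi_finite : (Set.extremePoints ℝ (Xi d)).Finite :=
  vSet_finite.subset extremePoints_Xi_sub

lemma sum_ind (A : Finset (Fin d)) : ∑ i, ind A i = A.card := by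
  simp [ind, Finset.sum_boole, Finset.filter_mem_eq_inter]

lemma cube_mem_vSet {h : ℕ} (hd : d = 2*h+1) {A : Finset (Fin d)}
    (hA : A.card = h ∨ A.card = h+1) : ind A ∈ vSet d := by
  refine Or.inr ⟨fun i => ?_, ?_⟩
  · unfold ind; split_ifs <;> simp
  · have hs : ∑ i, ind A i = A.card := sum_ind A
    have hdr : (d : ℝ) = 2*h+1 := by exact_mod_cast congrArg (Nat.cast : ℕ → ℝ) hd
    constructor <;> rw [hs] <;> rcases hA with h' | h' <;> rw [h'] <;> push_cast <;> linarith

lemma sum_split (Hs Ks : Finset (Fin d)) (hKs : Ks ⊆ Hsᶜ) (f : Fin d → ℝ) :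
    ∑ i, f i = (∑ i ∈ Hs, f i) + (∑ i ∈ Ks, f i) + (∑ i ∈ Hsᶜ \ Ks, f i) := by
  have h1 : (∑ i ∈ Hsᶜ \ Ks, f i) + (∑ i ∈ Ks, f i) = ∑ i ∈ Hsᶜ, f i :=
    Finset.sum_sdiff hKs
  have h2 : (∑ i ∈ Hs, f i) + (∑ i ∈ Hsᶜ, f i) = ∑ i, f i :=
    Finset.sum_add_sum_compl Hs f
  linarith

lemma cvec_on_Hs {Hs Ks : Finset (Fin d)} {i : Fin d} (hi : i ∈ Hs) :
    cvec Hs Ks i = 1/2 := by simp [cvec, hi]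

lemma cvec_on_Ks {Hs Ks : Finset (Fin d)} (hKs : Ks ⊆ Hsᶜ) {i : Fin d} (hi : i ∈ Ks) :
    cvec Hs Ks i = 1 := by
  have : i ∉ Hs := by have := hKs hi; simpa using this
  simp [cvec, this, hi]

lemma cvec_on_Z {Hs Ks : Finset (Fin d)} {i : Fin d} (hi1 : i ∉ Hs) (hi2 : i ∉ Ks) :
    cvec Hs Ks i = 0 := by simp [cvec, hi1, hi2]

lemma sum_cvec {Hs Ks : Finset (Fin d)} (hKs : Ks ⊆ Hsᶜ) :
    ∑ i, cvec Hs Ks i = Ks.card + Hs.card / 2 := by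
  rw [sum_split Hs Ks hKs]
  have h1 : ∑ i ∈ Hs, cvec Hs Ks i = (Hs.card : ℝ) * (1/2) := by
    rw [Finset.sum_congr rfl (fun i hi => cvec_on_Hs hi)]
    simp [mul_comm]
  have h2 : ∑ i ∈ Ks, cvec Hs Ks i = (Ks.card : ℝ) := by
    rw [Finset.sum_congr rfl (fun i hi => cvec_on_Ks hKs hi)]
    simp
  have h3 : ∑ i ∈ Hsᶜ \ Ks, cvec Hs Ks i = 0 := by
    apply Finset.sum_eq_zero
    intro i hi
    rw [Finset.mem_sdiff, Finset.mem_compl] at hi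
    exact cvec_on_Z hi.1 hi.2
  rw [h1, h2, h3]; ring

lemma cvec_half_set (Hs Ks : Finset (Fin d)) (hKs : Ks ⊆ Hsᶜ) :
    {i | cvec Hs Ks i = 1/2} = (Hs : Set (Fin d)) := by
  ext i
  simp only [Set.mem_setOf_eq, Finset.coe_mem, Finset.mem_coe]
  constructor
  · intro hv
    by_contra hi
    by_cases hk : i ∈ Ks
    · rw [cvec_on_Ks hKs hk] at hv; norm_num at hv
    · rw [cvec_on_Z hi hk] at hv; norm_num at hv
  · intro hi; exact cvec_on_Hs hi

lemma cvec_mem_vSet {h : ℕ} (hd : d = 2*h+1) (hodd : Odd h)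
    {Hs Ks : Finset (Fin d)} (hHs : Hs.card = h) (hKs : Ks ⊆ Hsᶜ)
    (hcond : 2*Ks.card < h ∨ h + 2 < 2*Ks.card) : cvec Hs Ks ∈ vSet d := by
  refine Or.inl ⟨⟨fun i => ?_, ?_⟩, ?_⟩
  · unfold cvec; split_ifs <;> simp
  · rw [cvec_half_set Hs Ks hKs, Set.ncard_coe_finset, hHs]
    omega
  · intro hsl
    obtain ⟨h1, h2⟩ := hsl
    rw [sum_cvec hKs, hHs] at h1 h2
    have hdr : (d : ℝ) = 2*h+1 := by exact_mod_cast congrArg (Nat.cast : ℕ → ℝ) hd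
    rcases hcond with hc | hc
    · have : (2*Ks.card : ℝ) < h := by exact_mod_cast Nat.cast_lt.mpr hc
      push_cast at this ⊢
      linarith
    · have : (h : ℝ) + 2 < 2*Ks.card := by exact_mod_cast Nat.cast_lt.mpr hc
      push_cast at this ⊢
      linarith

lemma sum_eq_card_filter (x : Fin d → ℝ) (s : Finset (Fin d))
    (hx : ∀ i ∈ s, x i = 0 ∨ x i = 1) :
    ∑ i ∈ s, x i = ((s.filter (fun i => x i = 1)).card : ℝ) := by
  classical
  have hcong : ∀ i ∈ s, x i = if x i = 1 then (1:ℝ) else 0 := by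
    intro i hi
    rcases hx i hi with h0 | h1
    · rw [h0]; simp [h0]
    · rw [h1]; simp
  rw [Finset.sum_congr rfl hcong, Finset.sum_boole]

lemma sum_two_swap (x : Fin d → ℝ) {i j : Fin d} (hij : i ≠ j) (t : ℝ) :
    ∑ m, (fun m => if m = i then x i + t else if m = j then x j - t else x m) m
      = ∑ m, x m := by
  classical
  have hzero : ∀ m ∈ Finset.univ, m ∉ ({i, j} : Finset (Fin d)) →
      ((if m = i then x i + t else if m = j then x j - t else x m) - x m) = 0 := by
    intro m _ hm
    simp only [Finset.mem_insert, Finset.mem_singleton] at hm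
    push_neg at hm
    rw [if_neg hm.1, if_neg hm.2]
    ring
  have hsub : ∑ m ∈ ({i, j} : Finset (Fin d)),
      ((if m = i then x i + t else if m = j then x j - t else x m) - x m)
      = ∑ m, ((if m = i then x i + t else if m = j then x j - t else x m) - x m) :=
    Finset.sum_subset (Finset.subset_univ _) hzero
  have hpair : ∑ m ∈ ({i, j} : Finset (Fin d)),
      ((if m = i then x i + t else if m = j then x j - t else x m) - x m) = 0 := by
    rw [Finset.sum_pair hij]
    rw [if_pos rfl, if_neg hij.symm, if_pos rfl]
    ring
  have := Finset.sum_sub_distrib (s := (Finset.univ : Finset (Fin d)))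
    (f := fun m => if m = i then x i + t else if m = j then x j - t else x m) (g := x)
  rw [← hsub, hpair] at this
  linarith

/-- The middle section of the cube is inside `Ξ`. -/
lemma section_sub_Xi {h : ℕ} (hd : d = 2*h+1) {x : Fin d → ℝ}
    (hx : ∀ i, x i ∈ Icc (0:ℝ) 1) (hs : ∑ i, x i = (d:ℝ)/2) : x ∈ Xi d := by
  classical
  have hdr : (d : ℝ) = 2*h+1 := by exact_mod_cast congrArg (Nat.cast : ℕ → ℝ) hd
  suffices H : ∀ N (x : Fin d → ℝ),
      (Finset.univ.filter (fun i => x i ≠ 0 ∧ x i ≠ 1)).card ≤ N →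
      (∀ i, x i ∈ Icc (0:ℝ) 1) → ∑ i, x i = (d:ℝ)/2 → x ∈ Xi d by
    exact H _ x le_rfl hx hs
  intro N
  induction N with
  | zero =>
    intro x hcard hx hs
    exfalso
    have hall : ∀ i, x i = 0 ∨ x i = 1 := by
      intro i
      by_contra hc
      push_neg at hc
      have hmem : i ∈ Finset.univ.filter (fun i => x i ≠ 0 ∧ x i ≠ 1) := by
        simp [hc.1, hc.2]
      have := Finset.card_pos.mpr ⟨i, hmem⟩
      omega
    have hsum := sum_eq_card_filter x Finset.univ (fun i _ => hall i)
    rw [hs, hdr] at hsum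
    set B := Finset.univ.filter (fun i => x i = 1)
    have : (2 * B.card : ℝ) = 2*h+1 := by push_cast; linarith
    have : (2 * B.card : ℕ) = 2*h+1 := by exact_mod_cast this
    omega
  | succ N IH =>
    intro x hcard hx hs
    set Fx := Finset.univ.filter (fun i => x i ≠ 0 ∧ x i ≠ 1) with hFxdef
    by_cases hle : Fx.card ≤ N
    · exact IH x hle hx hs
    by_cases h2 : 2 ≤ Fx.card
    · -- inductive step: move mass between two fractional coordinates
      obtain ⟨i, hi, j, hj, hij⟩ := Finset.one_lt_card.mp h2
      have hxi := (Finset.mem_filter.mp hi).2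
      have hxj := (Finset.mem_filter.mp hj).2
      have hbi := hx i; have hbj := hx j
      rw [mem_Icc] at hbi hbj
      have hxi0 : 0 < x i := lt_of_le_of_ne hbi.1 (Ne.symm hxi.1)
      have hxi1 : x i < 1 := lt_of_le_of_ne hbi.2 hxi.2
      have hxj0 : 0 < x j := lt_of_le_of_ne hbj.1 (Ne.symm hxj.1)
      have hxj1 : x j < 1 := lt_of_le_of_ne hbj.2 hxj.2
      set t1 := min (1 - x i) (x j) with ht1def
      set t2 := min (x i) (1 - x j) with ht2def
      have ht1 : 0 < t1 := lt_min (by linarith) hxj0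
      have ht2 : 0 < t2 := lt_min hxi0 (by linarith)
      have ht1a : t1 ≤ 1 - x i := min_le_left _ _
      have ht1b : t1 ≤ x j := min_le_right _ _
      have ht2a : t2 ≤ x i := min_le_left _ _
      have ht2b : t2 ≤ 1 - x j := min_le_right _ _
      set y := fun m => if m = i then x i + t1 else if m = j then x j - t1 else x m
        with hydef
      set y' := fun m => if m = j then x j + t2 else if m = i then x i - t2 else x m
        with hy'def
      -- both have strictly fewer fractional coordinates
      have hcard_aux : ∀ (z : Fin d → ℝ), (∀ m, m ≠ i → m ≠ j → z m = x m) →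
          (z i = 1 ∨ z j = 0 ∨ z i = 0 ∨ z j = 1) →
          (Finset.univ.filter (fun m => z m ≠ 0 ∧ z m ≠ 1)).card ≤ N := by
        intro z hzoff hzkill
        have hsub : Finset.univ.filter (fun m => z m ≠ 0 ∧ z m ≠ 1) ⊆ Fx := by
          intro m hm
          rw [Finset.mem_filter] at hm
          by_cases hmi : m = i
          · subst hmi; exact hi
          by_cases hmj : m = j
          · subst hmj; exact hj
          rw [hzoff m hmi hmj] at hm
          rw [hFxdef, Finset.mem_filter]
          exact ⟨Finset.mem_univ m, hm.2⟩
        have hne : ¬ Fx ⊆ Finset.univ.filter (fun m => z m ≠ 0 ∧ z m ≠ 1) := by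
          intro hcon
          rcases hzkill with hk | hk | hk | hk
          · have := hcon hi
            rw [Finset.mem_filter] at this
            exact this.2.2 hk
          · have := hcon hj
            rw [Finset.mem_filter] at this
            exact this.2.1 hk
          · have := hcon hi
            rw [Finset.mem_filter] at this
            exact this.2.1 hk
          · have := hcon hj
            rw [Finset.mem_filter] at this
            exact this.2.2 hk
        have := Finset.card_lt_card (ssubset_of_subset_not_subset hsub hne)
        omega
      have hy_mem : y ∈ Xi d := by
        apply IH
        · apply hcard_aux
          · intro m hmi hmj
            rw [hydef]
            simp only
            rw [if_neg hmi, if_neg hmj]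
          · rcases min_cases (1 - x i) (x j) with ⟨hmin, -⟩ | ⟨hmin, -⟩
            · left
              rw [hydef]; simp only [if_pos rfl]
              rw [ht1def, hmin]; simp
            · right; left
              rw [hydef]; simp only [if_neg hij.symm, if_pos rfl]
              rw [ht1def, hmin]; simp
        · intro m
          rw [hydef]
          simp only
          rw [mem_Icc]
          by_cases hmi : m = i
          · subst hmi; rw [if_pos rfl]; constructor <;> linarith
          by_cases hmj : m = j
          · subst hmj; rw [if_neg hmi, if_pos rfl]; constructor <;> linarith
          · rw [if_neg hmi, if_neg hmj]
            have := hx m; rw [mem_Icc] at this; exact this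
        · rw [hydef, sum_two_swap x hij t1, hs]
      have hy'_mem : y' ∈ Xi d := by
        apply IH
        · apply hcard_aux
          · intro m hmi hmj
            rw [hy'def]
            simp only
            rw [if_neg hmj, if_neg hmi]
          · rcases min_cases (x i) (1 - x j) with ⟨hmin, -⟩ | ⟨hmin, -⟩
            · right; right; left
              rw [hy'def]; simp only [if_neg hij, if_pos rfl]
              rw [ht2def, hmin]; simp
            · right; right; right
              rw [hy'def]; simp only [if_pos rfl]
              rw [ht2def, hmin]; simp
        · intro m
          rw [hy'def]
          simp only
          rw [mem_Icc]
          by_cases hmj : m = j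
          · subst hmj; rw [if_pos rfl]; constructor <;> linarith
          by_cases hmi : m = i
          · subst hmi; rw [if_neg hmj, if_pos rfl]; constructor <;> linarith
          · rw [if_neg hmj, if_neg hmi]
            have := hx m; rw [mem_Icc] at this; exact this
        · rw [hy'def, sum_two_swap (x := x) hij.symm t2, hs]
      -- x is a convex combination of y and y'
      have hcomb : (t2/(t1+t2)) • y + (t1/(t1+t2)) • y' = x := by
        funext m
        have hts : 0 < t1 + t2 := by linarith
        simp only [Pi.add_apply, Pi.smul_apply, smul_eq_mul, hydef, hy'def]
        by_cases hmi : m = i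
        · subst hmi
          rw [if_pos rfl, if_neg hij, if_pos rfl]
          field_simp
          ring
        by_cases hmj : m = j
        · subst hmj
          rw [if_neg hmi, if_pos rfl, if_pos rfl]
          field_simp
          ring
        · rw [if_neg hmi, if_neg hmj, if_neg hmj, if_neg hmi]
          field_simp
          ring
      rw [← hcomb]
      have hts : 0 < t1 + t2 := by linarith
      exact (convex_convexHull ℝ (vSet d)) hy_mem hy'_mem
        (by positivity) (by positivity) (by field_simp; ring)
    · -- base: exactly one fractional coordinate
      push_neg at h2
      have hcard1 : Fx.card = 1 := by omega
      obtain ⟨i₀, hFx1⟩ := Finset.card_eq_one.mp hcard1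
      have hi₀ : i₀ ∈ Fx := by rw [hFx1]; exact Finset.mem_singleton_self i₀
      have hxi₀ := (Finset.mem_filter.mp hi₀).2
      have hoff : ∀ m, m ≠ i₀ → x m = 0 ∨ x m = 1 := by
        intro m hm
        by_contra hc
        push_neg at hc
        have : m ∈ Fx := by rw [hFxdef, Finset.mem_filter]; exact ⟨Finset.mem_univ m, hc⟩
        rw [hFx1, Finset.mem_singleton] at this
        exact hm this
      set B := (Finset.univ.erase i₀).filter (fun m => x m = 1) with hBdef
      have hsplit : ∑ m ∈ (Finset.univ.erase i₀), x m + x i₀ = ∑ m, x m :=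
        Finset.sum_erase_add _ _ (Finset.mem_univ i₀)
      have herase : ∑ m ∈ (Finset.univ.erase i₀), x m = (B.card : ℝ) := by
        apply sum_eq_card_filter
        intro m hm
        exact hoff m (Finset.ne_of_mem_erase hm)
      have hbx := hx i₀
      rw [mem_Icc] at hbx
      have hx0 : 0 < x i₀ := lt_of_le_of_ne hbx.1 (Ne.symm hxi₀.1)
      have hx1 : x i₀ < 1 := lt_of_le_of_ne hbx.2 hxi₀.2
      have hBsum : (B.card : ℝ) + x i₀ = h + 1/2 := by
        rw [herase] at hsplit
        rw [hs, hdr] at hsplit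
        linarith
      have hBh : B.card = h := by
        have l1 : (B.card : ℝ) < h + 1 := by linarith
        have l2 : (h : ℝ) < B.card + 1 := by linarith
        have l1' : B.card < h + 1 := by exact_mod_cast l1
        have l2' : h < B.card + 1 := by exact_mod_cast l2
        omega
      have hxhalf : x i₀ = 1/2 := by
        rw [hBh] at hBsum; linarith
      have hi₀B : i₀ ∉ B := by
        rw [hBdef]
        intro hmem
        exact (Finset.notMem_erase i₀ _) (Finset.mem_of_mem_filter _ hmem)
      have hmem1 : ind B ∈ vSet d := cube_mem_vSet hd (Or.inl hBh)
      have hmem2 : ind (insert i₀ B) ∈ vSet d := by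
        apply cube_mem_vSet hd
        right
        rw [Finset.card_insert_of_notMem hi₀B, hBh]
      have hcomb : (1/2 : ℝ) • ind B + (1/2 : ℝ) • ind (insert i₀ B) = x := by
        funext m
        simp only [Pi.add_apply, Pi.smul_apply, smul_eq_mul, ind]
        by_cases hmi : m = i₀
        · subst hmi
          rw [if_neg hi₀B, if_pos (Finset.mem_insert_self _ _), hxhalf]
          ring
        · have hmB : m ∈ B ↔ x m = 1 := by
            rw [hBdef, Finset.mem_filter, Finset.mem_erase]
            constructor
            · rintro ⟨-, h⟩; exact h
            · intro h; exact ⟨⟨hmi, Finset.mem_univ m⟩, h⟩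
          rcases hoff m hmi with h0 | h1
          · have : m ∉ B := fun hm => by rw [hmB.mp hm] at h0; norm_num at h0
            rw [if_neg this, if_neg, h0]
            · ring
            · intro hm
              rcases Finset.mem_insert.mp hm with h' | h'
              · exact hmi h'
              · exact this h'
          · have hmBm : m ∈ B := hmB.mpr h1
            rw [if_pos hmBm, if_pos (Finset.mem_insert_of_mem hmBm), h1]
            ring
      rw [← hcomb]
      exact (convex_convexHull ℝ (vSet d)) (subset_convexHull ℝ _ hmem1)
        (subset_convexHull ℝ _ hmem2) (by norm_num) (by norm_num) (by norm_num)

/-- Kill lemma: a segment whose middle-section point has ≥ 3 fractional coordinates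
is not a face of `Ξ`. -/
lemma not_extreme_of_three_frac {h : ℕ} (hd : d = 2*h+1) {u v z : Fin d → ℝ}
    (hz : z ∈ openSegment ℝ u v) (hzc : ∀ i, z i ∈ Icc (0:ℝ) 1)
    (hzs : ∑ i, z i = (d:ℝ)/2) {i j l : Fin d} (hij : i ≠ j) (hil : i ≠ l) (hjl : j ≠ l)
    (hi : z i ≠ 0 ∧ z i ≠ 1) (hj : z j ≠ 0 ∧ z j ≠ 1) (hl : z l ≠ 0 ∧ z l ≠ 1) :
    ¬ IsExtreme ℝ (Xi d) (segment ℝ u v) := by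
  intro hext
  have hzseg : z ∈ segment ℝ u v := openSegment_subset_segment ℝ u v hz
  have hbi := hzc i; have hbj := hzc j; have hbl := hzc l
  rw [mem_Icc] at hbi hbj hbl
  have hzi0 : 0 < z i := lt_of_le_of_ne hbi.1 (Ne.symm hi.1)
  have hzi1 : z i < 1 := lt_of_le_of_ne hbi.2 hi.2
  have hj0 : 0 < z j := lt_of_le_of_ne hbj.1 (Ne.symm hj.1)
  have hj1 : z j < 1 := lt_of_le_of_ne hbj.2 hj.2
  have hl0 : 0 < z l := lt_of_le_of_ne hbl.1 (Ne.symm hl.1)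
  have hl1 : z l < 1 := lt_of_le_of_ne hbl.2 hl.2
  set ε := min (min (z i) (1 - z i)) (min (min (z j) (1 - z j)) (min (z l) (1 - z l)))
    with hεdef
  have hε0 : 0 < ε := by
    apply lt_min (lt_min hzi0 (by linarith))
    exact lt_min (lt_min hj0 (by linarith)) (lt_min hl0 (by linarith))
  have hεi0 : ε ≤ z i := le_trans (min_le_left _ _) (min_le_left _ _)
  have hεi1 : ε ≤ 1 - z i := le_trans (min_le_left _ _) (min_le_right _ _)
  have hεj0 : ε ≤ z j :=
    le_trans (min_le_right _ _) (le_trans (min_le_left _ _) (min_le_left _ _))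
  have hεj1 : ε ≤ 1 - z j :=
    le_trans (min_le_right _ _) (le_trans (min_le_left _ _) (min_le_right _ _))
  have hεl0 : ε ≤ z l :=
    le_trans (min_le_right _ _) (le_trans (min_le_right _ _) (min_le_left _ _))
  have hεl1 : ε ≤ 1 - z l :=
    le_trans (min_le_right _ _) (le_trans (min_le_right _ _) (min_le_right _ _))
  -- generic perturbation membership
  have hmem : ∀ p q : Fin d, p ≠ q → ε ≤ 1 - z p → ε ≤ z q →
      (fun m => if m = p then z p + ε else if m = q then z q - ε else z m) ∈ Xi d := by
    intro p q hpq hp hq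
    apply section_sub_Xi hd
    · intro m
      rw [mem_Icc]
      have hbm := hzc m; rw [mem_Icc] at hbm
      by_cases hmp : m = p
      · subst hmp
        rw [if_pos rfl]
        have := (hzc m); rw [mem_Icc] at this
        constructor <;> [linarith [this.1]; linarith]
      by_cases hmq : m = q
      · subst hmq
        rw [if_neg hmp, if_pos rfl]
        have := (hzc m); rw [mem_Icc] at this
        constructor <;> [linarith; linarith [this.2]]
      · rw [if_neg hmp, if_neg hmq]
        exact hbm
    · rw [sum_two_swap z hpq ε]
      exact hzs
  have hm12 := hmem i j hij hεi1 hεj0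
  have hm21 := hmem j i hij.symm hεj1 hεi0
  have hm34 := hmem i l hil hεi1 hεl0
  have hm43 := hmem l i hil.symm hεl1 hεi0
  -- z is the midpoint of each pair
  have hmidij : z ∈ openSegment ℝ
      (fun m => if m = i then z i + ε else if m = j then z j - ε else z m)
      (fun m => if m = j then z j + ε else if m = i then z i - ε else z m) := by
    refine ⟨1/2, 1/2, by norm_num, by norm_num, by norm_num, ?_⟩
    funext m
    simp only [Pi.add_apply, Pi.smul_apply, smul_eq_mul]
    by_cases hmp : m = i
    · subst hmp; rw [if_pos rfl, if_neg hij, if_pos rfl]; ring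
    by_cases hmq : m = j
    · subst hmq; rw [if_neg hmp, if_pos rfl, if_pos rfl]; ring
    · rw [if_neg hmp, if_neg hmq, if_neg hmq, if_neg hmp]; ring
  have hmidil : z ∈ openSegment ℝ
      (fun m => if m = i then z i + ε else if m = l then z l - ε else z m)
      (fun m => if m = l then z l + ε else if m = i then z i - ε else z m) := by
    refine ⟨1/2, 1/2, by norm_num, by norm_num, by norm_num, ?_⟩
    funext m
    simp only [Pi.add_apply, Pi.smul_apply, smul_eq_mul]
    by_cases hmp : m = i
    · subst hmp; rw [if_pos rfl, if_neg hil, if_pos rfl]; ring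
    by_cases hmq : m = l
    · subst hmq; rw [if_neg hmp, if_pos rfl, if_pos rfl]; ring
    · rw [if_neg hmp, if_neg hmq, if_neg hmq, if_neg hmp]; ring
  have h12 := And.intro (hext.2 hm12 hm21 hzseg hmidij)
    (hext.right_mem_of_mem_openSegment hm12 hm21 hzseg hmidij)
  have h34 := And.intro (hext.2 hm34 hm43 hzseg hmidil)
    (hext.right_mem_of_mem_openSegment hm34 hm43 hzseg hmidil)
  have hli : l ≠ i := hil.symm
  have hlj : l ≠ j := hjl.symm
  obtain ⟨a1, b1, -, -, hab1, he1⟩ := h12.1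
  obtain ⟨a2, b2, -, -, hab2, he2⟩ := h12.2
  obtain ⟨a3, b3, -, -, hab3, he3⟩ := h34.1
  obtain ⟨a4, b4, -, -, hab4, he4⟩ := h34.2
  have c1i : a1 * u i + b1 * v i = z i + ε := by
    have hc := congrFun he1 i
    simp only [Pi.add_apply, Pi.smul_apply, smul_eq_mul] at hc
    rw [hc]; simp
  have c2i : a2 * u i + b2 * v i = z i - ε := by
    have hc := congrFun he2 i
    simp only [Pi.add_apply, Pi.smul_apply, smul_eq_mul] at hc
    rw [hc]; simp [hij]
  have c1l : a1 * u l + b1 * v l = z l := by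
    have hc := congrFun he1 l
    simp only [Pi.add_apply, Pi.smul_apply, smul_eq_mul] at hc
    rw [hc]; simp [hli, hlj]
  have c2l : a2 * u l + b2 * v l = z l := by
    have hc := congrFun he2 l
    simp only [Pi.add_apply, Pi.smul_apply, smul_eq_mul] at hc
    rw [hc]; simp [hli, hlj]
  have c3l : a3 * u l + b3 * v l = z l - ε := by
    have hc := congrFun he3 l
    simp only [Pi.add_apply, Pi.smul_apply, smul_eq_mul] at hc
    rw [hc]; simp [hli]
  have c4l : a4 * u l + b4 * v l = z l + ε := by
    have hc := congrFun he4 l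
    simp only [Pi.add_apply, Pi.smul_apply, smul_eq_mul] at hc
    rw [hc]; simp
  have hβ : (b1 - b2) * (v i - u i) = 2*ε := by
    have ha1 : a1 = 1 - b1 := by linarith
    have ha2 : a2 = 1 - b2 := by linarith
    rw [ha1] at c1i; rw [ha2] at c2i
    linear_combination c1i - c2i
  have hβl : (b1 - b2) * (v l - u l) = 0 := by
    have ha1 : a1 = 1 - b1 := by linarith
    have ha2 : a2 = 1 - b2 := by linarith
    rw [ha1] at c1l; rw [ha2] at c2l
    linear_combination c1l - c2l
  have hγl : (b3 - b4) * (v l - u l) = -(2*ε) := by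
    have ha3 : a3 = 1 - b3 := by linarith
    have ha4 : a4 = 1 - b4 := by linarith
    rw [ha3] at c3l; rw [ha4] at c4l
    linear_combination c3l - c4l
  have hb12 : b1 - b2 ≠ 0 := by
    intro h0
    rw [h0, zero_mul] at hβ
    linarith
  have hvl : v l - u l = 0 := by
    rcases mul_eq_zero.mp hβl with h0 | h0
    · exact absurd h0 hb12
    · exact h0
  rw [hvl, mul_zero] at hγl
  linarith

set_option maxHeartbeats 1200000 in
/-- Characterization of crossing edges. -/
lemma crossing_char {h : ℕ} (hd : d = 2*h+1) (hh : 3 ≤ h) {u v : Fin d → ℝ}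
    (hu : u ∈ vSet d) (hv : v ∈ vSet d) (hus : ∑ i, u i < (d:ℝ)/2)
    (hvs : (d:ℝ)/2 < ∑ i, v i) (he : IsExtreme ℝ (Xi d) (segment ℝ u v)) :
    ∃ (A : Finset (Fin d)) (i : Fin d), A.card = h ∧ i ∉ A ∧ u = ind A ∧
      v = ind (insert i A) := by
  classical
  have hdr : (d : ℝ) = 2*h+1 := by exact_mod_cast congrArg (Nat.cast : ℕ → ℝ) hd
  have hu01 : ∀ m, 0 ≤ u m ∧ u m ≤ 1 := by
    intro m; rcases vSet_coords hu m with h' | h' | h' <;> rw [h'] <;> norm_num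
  have hv01 : ∀ m, 0 ≤ v m ∧ v m ≤ 1 := by
    intro m; rcases vSet_coords hv m with h' | h' | h' <;> rw [h'] <;> norm_num
  set su := ∑ i, u i with hsu
  set sv := ∑ i, v i with hsv
  have hsvsu : 0 < sv - su := by linarith
  set t := ((d:ℝ)/2 - su)/(sv - su) with htdef
  have ht0 : 0 < t := div_pos (by linarith) hsvsu
  have ht1 : t < 1 := by
    rw [htdef, div_lt_one hsvsu]
    linarith
  set z := fun m => (1-t) * u m + t * v m with hzdef
  have hzopen : z ∈ openSegment ℝ u v := by
    refine ⟨1-t, t, by linarith, ht0, by ring, ?_⟩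
    funext m
    simp [smul_eq_mul]; rfl
  have htmul : t * (sv - su) = (d:ℝ)/2 - su := by
    rw [htdef]; field_simp
  have hzsum : ∑ i, z i = (d:ℝ)/2 := by
    rw [hzdef]
    rw [Finset.sum_add_distrib, ← Finset.mul_sum, ← Finset.mul_sum, ← hsu, ← hsv]
    linear_combination htmul
  have hzc : ∀ m, z m ∈ Icc (0:ℝ) 1 := by
    intro m
    have hzm : z m = (1-t) * u m + t * v m := rfl
    rw [mem_Icc, hzm]
    constructor
    · nlinarith [(hu01 m).1, (hv01 m).1, mul_nonneg ht0.le (hv01 m).1,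
        mul_nonneg (by linarith : (0:ℝ) ≤ 1 - t) (hu01 m).1]
    · nlinarith [(hu01 m).2, (hv01 m).2, mul_le_mul_of_nonneg_left (hv01 m).2 ht0.le,
        mul_le_mul_of_nonneg_left (hu01 m).2 (by linarith : (0:ℝ) ≤ 1 - t)]
  -- a center endpoint would give three fractional coordinates
  have hucube : u ∈ cubeVerts d ∧ u ∈ slabL d := by
    rcases hu with ⟨huc, -⟩ | h'
    · exfalso
      set Hu := Finset.univ.filter (fun m => u m = 1/2) with hHu
      have hcard : Hu.card = h := by
        have : {m | u m = 1/2} = (Hu : Set (Fin d)) := by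
          ext m; simp [hHu]
        have hn := huc.2
        rw [this, Set.ncard_coe_finset] at hn
        omega
      have h3 : 3 ≤ Hu.card := by omega
      obtain ⟨T, hTsub, hT3⟩ := Finset.exists_subset_card_eq h3
      obtain ⟨i, j, l, hij, hil, hjl, rfl⟩ := Finset.card_eq_three.mp hT3
      have hfrac : ∀ m ∈ Hu, z m ≠ 0 ∧ z m ≠ 1 := by
        intro m hm
        have hum : u m = 1/2 := (Finset.mem_filter.mp hm).2
        have hvm := hv01 m
        have hzm : z m = (1-t) * u m + t * v m := rfl
        rw [hzm]
        constructor
        · have : 0 < (1-t) * u m + t * v m := by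
            rw [hum]; nlinarith [hvm.1, mul_nonneg ht0.le hvm.1]
          exact ne_of_gt this
        · have : (1-t) * u m + t * v m < 1 := by
            rw [hum]; nlinarith [hvm.2, mul_le_mul_of_nonneg_left hvm.2 ht0.le]
          exact ne_of_lt this
      have hiT : i ∈ Hu := hTsub (by simp)
      have hjT : j ∈ Hu := hTsub (by simp)
      have hlT : l ∈ Hu := hTsub (by simp)
      exact not_extreme_of_three_frac hd hzopen hzc hzsum hij hil hjl
        (hfrac i hiT) (hfrac j hjT) (hfrac l hlT) he
    · exact h'
  have hvcube : v ∈ cubeVerts d ∧ v ∈ slabL d := by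
    rcases hv with ⟨hvc, -⟩ | h'
    · exfalso
      set Hv := Finset.univ.filter (fun m => v m = 1/2) with hHv
      have hcard : Hv.card = h := by
        have : {m | v m = 1/2} = (Hv : Set (Fin d)) := by
          ext m; simp [hHv]
        have hn := hvc.2
        rw [this, Set.ncard_coe_finset] at hn
        omega
      have h3 : 3 ≤ Hv.card := by omega
      obtain ⟨T, hTsub, hT3⟩ := Finset.exists_subset_card_eq h3
      obtain ⟨i, j, l, hij, hil, hjl, rfl⟩ := Finset.card_eq_three.mp hT3
      have hfrac : ∀ m ∈ Hv, z m ≠ 0 ∧ z m ≠ 1 := by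
        intro m hm
        have hvm : v m = 1/2 := (Finset.mem_filter.mp hm).2
        have hum := hu01 m
        have hzm : z m = (1-t) * u m + t * v m := rfl
        rw [hzm]
        constructor
        · have : 0 < (1-t) * u m + t * v m := by
            rw [hvm]
            nlinarith [hum.1, mul_nonneg (by linarith : (0:ℝ) ≤ 1 - t) hum.1]
          exact ne_of_gt this
        · have : (1-t) * u m + t * v m < 1 := by
            rw [hvm]
            nlinarith [hum.2, mul_le_mul_of_nonneg_left hum.2 (by linarith : (0:ℝ) ≤ 1 - t)]
          exact ne_of_lt this
      have hiT : i ∈ Hv := hTsub (by simp)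
      have hjT : j ∈ Hv := hTsub (by simp)
      have hlT : l ∈ Hv := hTsub (by simp)
      exact not_extreme_of_three_frac hd hzopen hzc hzsum hij hil hjl
        (hfrac i hiT) (hfrac j hjT) (hfrac l hlT) he
    · exact h'
  -- cube vertices at levels h and h+1
  set A := Finset.univ.filter (fun m => u m = 1) with hA
  set B := Finset.univ.filter (fun m => v m = 1) with hB
  have hsuA : ∑ i, u i = (A.card : ℝ) :=
    sum_eq_card_filter u Finset.univ (fun m _ => hucube.1 m)
  have hsvB : ∑ i, v i = (B.card : ℝ) :=
    sum_eq_card_filter v Finset.univ (fun m _ => hvcube.1 m)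
  have hAcard : A.card = h := by
    have hl := hucube.2.1
    have hus' : ∑ i, u i < (d:ℝ)/2 := hus
    rw [hsuA, hdr] at hl hus'
    have l1 : (h:ℝ) ≤ (A.card:ℝ) := by push_cast at hl ⊢; linarith
    have l2 : (A.card:ℝ) < (h:ℝ) + 1 := by push_cast at hus' ⊢; linarith
    have l1' : h ≤ A.card := by exact_mod_cast l1
    have l2' : (A.card:ℝ) < ((h+1:ℕ):ℝ) := by push_cast; linarith
    have l2'' : A.card < h + 1 := by exact_mod_cast l2'
    omega
  have hBcard : B.card = h + 1 := by
    have hl := hvcube.2.2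
    have hvs' : (d:ℝ)/2 < ∑ i, v i := hvs
    rw [hsvB, hdr] at hl hvs'
    have l1 : (B.card:ℝ) ≤ ((h+1:ℕ):ℝ) := by push_cast at hl ⊢; linarith
    have l2 : (h:ℝ) < (B.card:ℝ) := by push_cast at hvs' ⊢; linarith
    have l1' : B.card ≤ h + 1 := by exact_mod_cast l1
    have l2' : h < B.card := by exact_mod_cast l2
    omega
  have hsu2 : su = (A.card : ℝ) := hsuA
  have hsv2 : sv = (B.card : ℝ) := hsvB
  have hteq : t = 1/2 := by
    rw [htdef, hsu2, hsv2, hAcard, hBcard, hdr]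
    push_cast
    have hd1 : (h:ℝ) + 1 - (h:ℝ) = 1 := by ring
    rw [hd1, div_one]
    ring
  -- the difference set
  set D := Finset.univ.filter (fun m => u m ≠ v m) with hD
  have hDfrac : ∀ m ∈ D, z m ≠ 0 ∧ z m ≠ 1 := by
    intro m hm
    have hne : u m ≠ v m := (Finset.mem_filter.mp hm).2
    have hzm : z m = (1-t) * u m + t * v m := rfl
    have hz12 : z m = 1/2 := by
      rw [hzm, hteq]
      rcases hucube.1 m with h0 | h1 <;> rcases hvcube.1 m with g0 | g1
      · exact absurd (h0.trans g0.symm) hne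
      · rw [h0, g1]; norm_num
      · rw [h1, g0]; norm_num
      · exact absurd (h1.trans g1.symm) hne
    rw [hz12]; norm_num
  have hD2 : D.card ≤ 2 := by
    by_contra hc
    push_neg at hc
    obtain ⟨T, hTsub, hT3⟩ := Finset.exists_subset_card_eq (by omega : 3 ≤ D.card)
    obtain ⟨i, j, l, hij, hil, hjl, rfl⟩ := Finset.card_eq_three.mp hT3
    exact not_extreme_of_three_frac hd hzopen hzc hzsum hij hil hjl
      (hDfrac i (hTsub (by simp))) (hDfrac j (hTsub (by simp)))
      (hDfrac l (hTsub (by simp))) he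
  have hsumD : ∑ m ∈ D, (v m - u m) = 1 := by
    have hzero : ∀ m ∈ Finset.univ, m ∉ D → v m - u m = 0 := by
      intro m _ hm
      rw [hD, Finset.mem_filter] at hm
      push_neg at hm
      have := hm (Finset.mem_univ m)
      rw [this]; ring
    have := Finset.sum_subset (Finset.subset_univ D) hzero
    rw [this, Finset.sum_sub_distrib, hsuA, hsvB, hAcard, hBcard]
    push_cast
    ring
  have hpm : ∀ m ∈ D, v m - u m = 1 ∨ v m - u m = -1 := by
    intro m hm
    have hne : u m ≠ v m := (Finset.mem_filter.mp hm).2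
    rcases hucube.1 m with h0 | h1 <;> rcases hvcube.1 m with g0 | g1
    · exact absurd (h0.trans g0.symm) hne
    · left; rw [h0, g1]; norm_num
    · right; rw [h1, g0]; norm_num
    · exact absurd (h1.trans g1.symm) hne
  have hD1 : D.card = 1 := by
    interval_cases hDc : D.card
    · exfalso
      rw [Finset.card_eq_zero.mp hDc] at hsumD
      simp at hsumD
    · rfl
    · exfalso
      obtain ⟨p, q, hpq, hDeq⟩ := Finset.card_eq_two.mp hDc
      rw [hDeq, Finset.sum_pair hpq] at hsumD
      have hp := hpm p (by rw [hDeq]; simp)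
      have hq := hpm q (by rw [hDeq]; simp)
      rcases hp with hp | hp <;> rcases hq with hq | hq <;> rw [hp, hq] at hsumD <;>
        norm_num at hsumD
  obtain ⟨i₀, hDeq⟩ := Finset.card_eq_one.mp hD1
  have hi₀D : i₀ ∈ D := by rw [hDeq]; simp
  have hdiff : v i₀ - u i₀ = 1 := by
    rw [hDeq, Finset.sum_singleton] at hsumD
    exact hsumD
  have hui₀ : u i₀ = 0 := by
    rcases hucube.1 i₀ with h0 | h1
    · exact h0
    · exfalso
      rcases hvcube.1 i₀ with g0 | g1
      · rw [h1, g0] at hdiff; norm_num at hdiff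
      · rw [h1, g1] at hdiff; norm_num at hdiff
  have hvi₀ : v i₀ = 1 := by linarith
  have hoffD : ∀ m, m ≠ i₀ → u m = v m := by
    intro m hm
    by_contra hc
    have : m ∈ D := by rw [hD, Finset.mem_filter]; exact ⟨Finset.mem_univ m, hc⟩
    rw [hDeq, Finset.mem_singleton] at this
    exact hm this
  have hi₀A : i₀ ∉ A := by
    intro hmem
    have hval : u i₀ = 1 := (Finset.mem_filter.mp hmem).2
    rw [hui₀] at hval
    norm_num at hval
  refine ⟨A, i₀, hAcard, hi₀A, ?_, ?_⟩
  · funext m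
    rw [ind]
    by_cases hmA : m ∈ A
    · rw [if_pos hmA]
      exact (Finset.mem_filter.mp hmA).2
    · rw [if_neg hmA]
      rcases hucube.1 m with h0 | h1
      · exact h0
      · exfalso
        exact hmA (by rw [hA, Finset.mem_filter]; exact ⟨Finset.mem_univ m, h1⟩)
  · funext m
    rw [ind]
    by_cases hmi : m = i₀
    · subst hmi
      rw [if_pos (Finset.mem_insert_self _ _)]
      exact hvi₀
    · have hvu : v m = u m := (hoffD m hmi).symm
      by_cases hmA : m ∈ A
      · rw [if_pos (Finset.mem_insert_of_mem hmA), hvu]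
        exact (Finset.mem_filter.mp hmA).2
      · rw [if_neg, hvu]
        · rcases hucube.1 m with h0 | h1
          · exact h0
          · exact absurd (by rw [hA, Finset.mem_filter]; exact ⟨Finset.mem_univ m, h1⟩) hmA
        · intro hc
          rcases Finset.mem_insert.mp hc with h' | h'
          · exact hmi h'
          · exact hmA h'

lemma extreme_of_exposed {s : Set (Fin d → ℝ)} (F : (Fin d → ℝ) →ₗ[ℝ] ℝ) {c : Fin d → ℝ}
    (hc : c ∈ s) (hmax : ∀ p ∈ s, p ≠ c → F p < F c) :
    c ∈ Set.extremePoints ℝ (convexHull ℝ s) := by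
  have key : ∀ x ∈ convexHull ℝ s, F x ≤ F c ∧ (F x = F c → x = c) := by
    intro x hx
    rw [convexHull_eq] at hx
    obtain ⟨ι, t, w, z, hw0, hw1, hzs, hcm⟩ := hx
    have hxe : x = ∑ i ∈ t, w i • z i := by
      rw [← hcm, Finset.centerMass_eq_of_sum_1 _ _ hw1]
    have hFx : F x = ∑ i ∈ t, w i * F (z i) := by
      rw [hxe, map_sum]
      simp
    have hle : ∀ i ∈ t, w i * F (z i) ≤ w i * F c := by
      intro i hi
      apply mul_le_mul_of_nonneg_left _ (hw0 i hi)
      rcases eq_or_ne (z i) c with h | h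
      · rw [h]
      · exact (hmax _ (hzs i hi) h).le
    have hsum_le : F x ≤ F c := by
      rw [hFx]
      calc ∑ i ∈ t, w i * F (z i) ≤ ∑ i ∈ t, w i * F c := Finset.sum_le_sum hle
        _ = F c := by rw [← Finset.sum_mul, hw1, one_mul]
    refine ⟨hsum_le, fun heq => ?_⟩
    have hzero : ∀ i ∈ t, w i * F c - w i * F (z i) = 0 := by
      have h0 : ∑ i ∈ t, (w i * F c - w i * F (z i)) = 0 := by
        rw [Finset.sum_sub_distrib, ← Finset.sum_mul, hw1, one_mul, ← hFx, heq, sub_self]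
      intro i hi
      have := (Finset.sum_eq_zero_iff_of_nonneg (fun i hi => sub_nonneg.mpr (hle i hi))).mp h0
      exact this i hi
    have hzc : ∀ i ∈ t, w i • z i = w i • c := by
      intro i hi
      rcases eq_or_ne (w i) 0 with h | h
      · rw [h, zero_smul, zero_smul]
      · have : F (z i) = F c := by
          have h'' : w i * F (z i) = w i * F c := by linarith [hzero i hi]
          exact mul_left_cancel₀ h h''
        rcases eq_or_ne (z i) c with h' | h'
        · rw [h']
        · exact absurd this (ne_of_lt (hmax _ (hzs i hi) h'))
    rw [hxe, Finset.sum_congr rfl hzc, ← Finset.sum_smul, hw1, one_smul]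
  refine ⟨subset_convexHull ℝ s hc, ?_⟩
  intro x₁ hx₁ x₂ hx₂ hseg
  obtain ⟨a, b, ha, hb, hab, hsum⟩ := hseg
  have hF : a * F x₁ + b * F x₂ = F c := by
    rw [← hsum]; simp [map_add, map_smul]
  have h1 := key x₁ hx₁
  have h2 := key x₂ hx₂
  have hfc : a * F c + b * F c = F c := by rw [← add_mul, hab, one_mul]
  have e1 : F x₁ = F c := by
    by_contra hne
    have hlt : a * F x₁ < a * F c := mul_lt_mul_of_pos_left (lt_of_le_of_ne h1.1 hne) ha
    have h2' : b * F x₂ ≤ b * F c := mul_le_mul_of_nonneg_left h2.1 hb.le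
    linarith
  have e2 : F x₂ = F c := by
    by_contra hne
    have hlt : b * F x₂ < b * F c := mul_lt_mul_of_pos_left (lt_of_le_of_ne h2.1 hne) hb
    have h1' : a * F x₁ ≤ a * F c := mul_le_mul_of_nonneg_left h1.1 ha.le
    linarith
  exact h1.2 e1

lemma sum_ite_two (s T : Finset (Fin d)) (r q : ℝ) :
    ∑ i ∈ s, (if i ∈ T then r else q)
      = ((s.filter (fun i => i ∈ T)).card : ℝ) * r
        + ((s.filter (fun i => i ∉ T)).card : ℝ) * q := by
  classical
  rw [Finset.sum_ite, Finset.sum_const, Finset.sum_const, nsmul_eq_mul, nsmul_eq_mul]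

set_option maxHeartbeats 1600000 in
lemma center_extreme {h : ℕ} (hd : d = 2*h+1) (hh : 3 ≤ h) (hodd : Odd h)
    {Hs Ks : Finset (Fin d)} (hHs : Hs.card = h) (hKs : Ks ⊆ Hsᶜ)
    (hcond : 2*Ks.card < h + 1 ∨ h + 1 < 2*Ks.card) :
    cvec Hs Ks ∈ Set.extremePoints ℝ (Xi d) := by
  classical
  obtain ⟨mo, hmo⟩ := hodd
  have hdr : (d : ℝ) = 2*h+1 := by exact_mod_cast congrArg (Nat.cast : ℕ → ℝ) hd
  have hvmem : cvec Hs Ks ∈ vSet d := by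
    apply cvec_mem_vSet hd ⟨mo, hmo⟩ hHs hKs
    rcases hcond with hc | hc
    · left; omega
    · right; omega
  set Z := Hsᶜ \ Ks with hZdef
  have hZmem : ∀ i, i ∈ Z ↔ (i ∉ Hs ∧ i ∉ Ks) := by
    intro i
    rw [hZdef, Finset.mem_sdiff, Finset.mem_compl]
  have hKsnotHs : ∀ i ∈ Ks, i ∉ Hs := by
    intro i hi
    have := hKs hi
    rwa [Finset.mem_compl] at this
  obtain ⟨σ, hσval, hσk⟩ :
      ∃ σ : ℝ, (σ = -(1/2) ∨ σ = 1/2) ∧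
        ((σ = -(1/2) ∧ 2*Ks.card + 1 ≤ h) ∨ (σ = 1/2 ∧ h + 3 ≤ 2*Ks.card)) := by
    rcases hcond with hc | hc
    · exact ⟨-(1/2), Or.inl rfl, Or.inl ⟨rfl, by omega⟩⟩
    · exact ⟨1/2, Or.inr rfl, Or.inr ⟨rfl, by omega⟩⟩
  set coef : Fin d → ℝ := fun i => if i ∈ Hs then σ else if i ∈ Ks then 1 else -1
    with hcoef
  have hcoefHs : ∀ i ∈ Hs, coef i = σ := by intro i hi; simp [hcoef, hi]
  have hcoefKs : ∀ i ∈ Ks, coef i = 1 := by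
    intro i hi; simp [hcoef, hKsnotHs i hi, hi]
  have hcoefZ : ∀ i ∈ Z, coef i = -1 := by
    intro i hi
    have := (hZmem i).mp hi
    simp [hcoef, this.1, this.2]
  have hXi : Xi d = convexHull ℝ (vSet d) := rfl
  rw [hXi]
  refine extreme_of_exposed
    { toFun := fun x => ∑ i, coef i * x i
      map_add' := fun x y => by
        simp only [Pi.add_apply, mul_add]
        rw [Finset.sum_add_distrib]
      map_smul' := fun r x => by
        simp only [Pi.smul_apply, smul_eq_mul, RingHom.id_apply, Finset.mul_sum]
        exact Finset.sum_congr rfl fun i _ => by ring } hvmem ?_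
  intro p hp hpne
  simp only [LinearMap.coe_mk, AddHom.coe_mk]
  set c := cvec Hs Ks with hc
  -- reduce to positivity of the difference sum
  suffices hpos : 0 < ∑ i, coef i * (c i - p i) by
    have hsplit : ∑ i, coef i * (c i - p i)
        = (∑ i, coef i * c i) - ∑ i, coef i * p i := by
      rw [← Finset.sum_sub_distrib]
      exact Finset.sum_congr rfl fun i _ => by ring
    rw [hsplit] at hpos
    linarith
  rw [sum_split Hs Ks hKs (fun i => coef i * (c i - p i)), ← hZdef]
  have hSHs : ∑ i ∈ Hs, coef i * (c i - p i) = ∑ i ∈ Hs, σ * (1/2 - p i) :=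
    Finset.sum_congr rfl fun i hi => by rw [hcoefHs i hi, hc, cvec_on_Hs hi]
  have hSKs : ∑ i ∈ Ks, coef i * (c i - p i) = ∑ i ∈ Ks, (1 - p i) :=
    Finset.sum_congr rfl fun i hi => by
      rw [hcoefKs i hi, hc, cvec_on_Ks hKs hi]; ring
  have hSZ : ∑ i ∈ Z, coef i * (c i - p i) = ∑ i ∈ Z, p i :=
    Finset.sum_congr rfl fun i hi => by
      have hm := (hZmem i).mp hi
      rw [hcoefZ i hi, hc, cvec_on_Z hm.1 hm.2]; ring
  rw [hSHs, hSKs, hSZ]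
  rcases hp with ⟨hpc, hpns⟩ | ⟨hpcube, hpslab⟩
  · -- p is a face center
    set Hp := Finset.univ.filter (fun m => p m = 1/2) with hHp
    have hHpmem : ∀ i, i ∈ Hp ↔ p i = 1/2 := by
      intro i; rw [hHp, Finset.mem_filter]; simp
    have hHpcard : Hp.card = h := by
      have hset : {m | p m = 1/2} = (Hp : Set (Fin d)) := by
        ext m; simp [hHp]
      have hn := hpc.2
      rw [hset, Set.ncard_coe_finset] at hn
      omega
    have hp01 : ∀ i, 0 ≤ p i ∧ p i ≤ 1 := by
      intro i; rcases hpc.1 i with h' | h' | h' <;> rw [h'] <;> norm_num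
    by_cases hHpHs : Hp = Hs
    · -- same half set: difference is concentrated on Ks and Z
      have hHsZero : ∑ i ∈ Hs, σ * (1/2 - p i) = 0 := by
        apply Finset.sum_eq_zero
        intro i hi
        have : p i = 1/2 := (hHpmem i).mp (hHpHs ▸ hi)
        rw [this]; ring
      rw [hHsZero]
      have hKsnn : ∀ i ∈ Ks, (0:ℝ) ≤ 1 - p i := fun i _ => by
        linarith [(hp01 i).2]
      have hZnn : ∀ i ∈ Z, (0:ℝ) ≤ p i := fun i _ => (hp01 i).1
      -- find a coordinate where p differs from c
      have hex : ∃ i₀, p i₀ ≠ c i₀ := by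
        by_contra hcon
        push_neg at hcon
        exact hpne (funext hcon)
      obtain ⟨i₀, hi₀⟩ := hex
      have hi₀Hs : i₀ ∉ Hs := by
        intro hmem
        have h1 : p i₀ = 1/2 := (hHpmem i₀).mp (hHpHs ▸ hmem)
        have h2 : c i₀ = 1/2 := cvec_on_Hs hmem
        exact hi₀ (h1.trans h2.symm)
      have hi₀half : p i₀ ≠ 1/2 := by
        intro hcon
        exact hi₀Hs (hHpHs ▸ (hHpmem i₀).mpr hcon)
      by_cases hi₀Ks : i₀ ∈ Ks
      · have hc1 : c i₀ = 1 := cvec_on_Ks hKs hi₀Ks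
        have hp0 : p i₀ = 0 := by
          rcases hpc.1 i₀ with h' | h' | h'
          · exact h'
          · exact absurd h' hi₀half
          · exact absurd (h'.trans hc1.symm) hi₀
        have hterm : (1:ℝ) ≤ 1 - p i₀ := by rw [hp0]; norm_num
        have hKsum : (1:ℝ) ≤ ∑ i ∈ Ks, (1 - p i) := by
          calc (1:ℝ) ≤ 1 - p i₀ := hterm
            _ ≤ ∑ i ∈ Ks, (1 - p i) := Finset.single_le_sum hKsnn hi₀Ks
        have hZsum : (0:ℝ) ≤ ∑ i ∈ Z, p i := Finset.sum_nonneg hZnn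
        linarith
      · have hi₀Z : i₀ ∈ Z := (hZmem i₀).mpr ⟨hi₀Hs, hi₀Ks⟩
        have hc0 : c i₀ = 0 := cvec_on_Z hi₀Hs hi₀Ks
        have hp1 : p i₀ = 1 := by
          rcases hpc.1 i₀ with h' | h' | h'
          · exact absurd (h'.trans hc0.symm) hi₀
          · exact absurd h' hi₀half
          · exact h'
        have hZsum : (1:ℝ) ≤ ∑ i ∈ Z, p i := by
          calc (1:ℝ) = p i₀ := hp1.symm
            _ ≤ ∑ i ∈ Z, p i := Finset.single_le_sum hZnn hi₀Z
        have hKsum : (0:ℝ) ≤ ∑ i ∈ Ks, (1 - p i) := Finset.sum_nonneg hKsnn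
        linarith
    · -- different half sets
      have hbndHs : ∀ i ∈ Hs, (if i ∈ Hp then (0:ℝ) else -(1/4)) ≤ σ * (1/2 - p i) := by
        intro i hi
        by_cases hiHp : i ∈ Hp
        · rw [if_pos hiHp, (hHpmem i).mp hiHp]
          norm_num
        · rw [if_neg hiHp]
          have hpnothalf : p i ≠ 1/2 := fun hcon => hiHp ((hHpmem i).mpr hcon)
          rcases hpc.1 i with h' | h' | h'
          · rw [h']
            rcases hσval with hs' | hs' <;> rw [hs'] <;> norm_num
          · exact absurd h' hpnothalf
          · rw [h']
            rcases hσval with hs' | hs' <;> rw [hs'] <;> norm_num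
      have hbndKs : ∀ i ∈ Ks, (if i ∈ Hp then (1/2:ℝ) else 0) ≤ 1 - p i := by
        intro i hi
        by_cases hiHp : i ∈ Hp
        · rw [if_pos hiHp, (hHpmem i).mp hiHp]; norm_num
        · rw [if_neg hiHp]; linarith [(hp01 i).2]
      have hbndZ : ∀ i ∈ Z, (if i ∈ Hp then (1/2:ℝ) else 0) ≤ p i := by
        intro i hi
        by_cases hiHp : i ∈ Hp
        · rw [if_pos hiHp, (hHpmem i).mp hiHp]
        · rw [if_neg hiHp]; exact (hp01 i).1
      have hLHs := Finset.sum_le_sum hbndHs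
      have hLKs := Finset.sum_le_sum hbndKs
      have hLZ := Finset.sum_le_sum hbndZ
      rw [sum_ite_two Hs Hp 0 (-(1/4))] at hLHs
      rw [sum_ite_two Ks Hp (1/2) 0] at hLKs
      rw [sum_ite_two Z Hp (1/2) 0] at hLZ
      set a := (Hs.filter (fun i => i ∈ Hp)).card with ha
      set b := (Ks.filter (fun i => i ∈ Hp)).card with hb
      set e := (Z.filter (fun i => i ∈ Hp)).card with he'
      have hHsnot : ((Hs.filter (fun i => i ∉ Hp)).card : ℕ) = h - a := by
        have hpart := Finset.card_filter_add_card_filter_not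
          (s := Hs) (p := fun i => i ∈ Hp)
        have hpart' : a + (Hs.filter (fun i => i ∉ Hp)).card = h := by
          rw [ha, ← hHs]
          first
            | exact hpart
            | convert hpart using 3
        omega
      have habe : a + b + e = h := by
        have h1 : Hp.filter (fun i => i ∈ Hs) = Hs.filter (fun i => i ∈ Hp) := by
          ext i
          simp only [Finset.mem_filter, hHp, Finset.mem_univ, true_and]
          tauto
        have h2 : Hp.filter (fun i => i ∈ Ks) = Ks.filter (fun i => i ∈ Hp) := by
          ext i
          simp only [Finset.mem_filter, hHp, Finset.mem_univ, true_and]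
          tauto
        have h3 : Hp.filter (fun i => i ∈ Z) = Z.filter (fun i => i ∈ Hp) := by
          ext i
          simp only [Finset.mem_filter, hHp, Finset.mem_univ, true_and]
          tauto
        have hp1 : (Hp.filter (fun i => i ∈ Hs)).card
            + (Hp.filter (fun i => i ∉ Hs)).card = Hp.card := by
          have := Finset.card_filter_add_card_filter_not
            (s := Hp) (p := fun i => i ∈ Hs)
          convert this using 3
        have hsplit2 : Hp.filter (fun i => i ∉ Hs)
            = (Hp.filter (fun i => i ∉ Hs)).filter (fun i => i ∈ Ks)
              ∪ (Hp.filter (fun i => i ∉ Hs)).filter (fun i => i ∉ Ks) := by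
          rw [Finset.filter_union_filter_not_eq]
        have hp2 : ((Hp.filter (fun i => i ∉ Hs)).filter (fun i => i ∈ Ks)).card
            + ((Hp.filter (fun i => i ∉ Hs)).filter (fun i => i ∉ Ks)).card
            = (Hp.filter (fun i => i ∉ Hs)).card := by
          have := Finset.card_filter_add_card_filter_not
            (s := Hp.filter (fun i => i ∉ Hs)) (p := fun i => i ∈ Ks)
          convert this using 3
        have he1 : (Hp.filter (fun i => i ∉ Hs)).filter (fun i => i ∈ Ks)
            = Hp.filter (fun i => i ∈ Ks) := by
          ext i
          simp only [Finset.mem_filter]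
          constructor
          · rintro ⟨⟨h1', -⟩, h3'⟩; exact ⟨h1', h3'⟩
          · rintro ⟨h1', h2'⟩; exact ⟨⟨h1', hKsnotHs i h2'⟩, h2'⟩
        have he2 : (Hp.filter (fun i => i ∉ Hs)).filter (fun i => i ∉ Ks)
            = Hp.filter (fun i => i ∈ Z) := by
          ext i
          simp only [Finset.mem_filter]
          constructor
          · rintro ⟨⟨h1', h2'⟩, h3'⟩; exact ⟨h1', (hZmem i).mpr ⟨h2', h3'⟩⟩
          · rintro ⟨h1', h2'⟩
            have := (hZmem i).mp h2'
            exact ⟨⟨h1', this.1⟩, this.2⟩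
        rw [he1, he2, h2, h3] at hp2
        rw [h1] at hp1
        rw [hHpcard] at hp1
        omega
      have halt : a < h := by
        by_contra hcon
        push_neg at hcon
        have hle : Hs.filter (fun i => i ∈ Hp) ⊆ Hs := Finset.filter_subset _ _
        have hcardle : a ≤ h := hHs ▸ Finset.card_le_card hle
        have haeq : a = h := le_antisymm hcardle hcon
        have : Hs.filter (fun i => i ∈ Hp) = Hs :=
          Finset.eq_of_subset_of_card_le hle (by omega)
        have hsub : Hs ⊆ Hp := by
          intro i hi
          have hmem : i ∈ Hs.filter (fun i => i ∈ Hp) := by rw [this]; exact hi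
          exact (Finset.mem_filter.mp hmem).2
        have : Hs = Hp := Finset.eq_of_subset_of_card_le hsub (by omega)
        exact hHpHs this.symm
      have hcast : ((Hs.filter (fun i => i ∉ Hp)).card : ℝ) = (h : ℝ) - a := by
        rw [hHsnot]
        have : a ≤ h := by omega
        push_cast [Nat.cast_sub this]
        ring
      have hbe : (b : ℝ) + e = (h : ℝ) - a := by
        have : b + e = h - a := by omega
        rw [← Nat.cast_add]
        rw [this]
        have : a ≤ h := by omega
        push_cast [Nat.cast_sub this]
        ring
      have hha : (0:ℝ) < (h:ℝ) - a := by
        have : (a:ℝ) < h := by exact_mod_cast halt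
        linarith
      linarith
  · -- p is a cube vertex in the slab
    have hp01 : ∀ i, 0 ≤ p i ∧ p i ≤ 1 := by
      intro i; rcases hpcube i with h' | h' <;> rw [h'] <;> norm_num
    set SH := ∑ i ∈ Hs, p i with hSHdef
    set SK := ∑ i ∈ Ks, p i with hSKdef
    set SZ := ∑ i ∈ Z, p i with hSZdef
    have e0 : ∑ i ∈ Hs, (1/2 - p i) = (h:ℝ)/2 - SH := by
      rw [Finset.sum_sub_distrib, Finset.sum_const, hHs, nsmul_eq_mul]
      ring
    have e1 : ∑ i ∈ Hs, σ * (1/2 - p i) = σ * ((h:ℝ)/2 - SH) := by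
      rw [← Finset.mul_sum, e0]
    have e2 : ∑ i ∈ Ks, (1 - p i) = (Ks.card : ℝ) - SK := by
      rw [Finset.sum_sub_distrib, Finset.sum_const, nsmul_eq_mul]
      ring
    have hPsplit : ∑ i, p i = SH + SK + SZ := by
      rw [sum_split Hs Ks hKs p, ← hZdef]
    have hP1 : (h:ℝ) ≤ ∑ i, p i := by
      have := hpslab.1
      rw [hdr] at this
      linarith
    have hP2 : ∑ i, p i ≤ (h:ℝ) + 1 := by
      have := hpslab.2
      rw [hdr] at this
      linarith
    have hSKle : SK ≤ (Ks.card : ℝ) := by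
      have := Finset.sum_le_card_nsmul Ks p 1 (fun i _ => (hp01 i).2)
      rw [nsmul_eq_mul, mul_one] at this
      exact this
    have hSZnn : 0 ≤ SZ := Finset.sum_nonneg (fun i _ => (hp01 i).1)
    have hSKnn : 0 ≤ SK := Finset.sum_nonneg (fun i _ => (hp01 i).1)
    rw [e1, e2]
    rcases hσk with ⟨hσeq, hk⟩ | ⟨hσeq, hk⟩
    · have hkr : 2*(Ks.card:ℝ) + 1 ≤ (h:ℝ) := by exact_mod_cast Nat.cast_le.mpr hk
      rw [hσeq]
      linarith
    · have hkr : (h:ℝ) + 3 ≤ 2*(Ks.card:ℝ) := by exact_mod_cast Nat.cast_le.mpr hk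
      rw [hσeq]
      linarith

lemma cvec_one_set (Hs Ks : Finset (Fin d)) (hKs : Ks ⊆ Hsᶜ) :
    {i | cvec Hs Ks i = 1} = (Ks : Set (Fin d)) := by
  ext i
  simp only [Set.mem_setOf_eq, Finset.mem_coe]
  constructor
  · intro hv
    by_contra hk
    by_cases hs : i ∈ Hs
    · rw [cvec_on_Hs hs] at hv; norm_num at hv
    · rw [cvec_on_Z hs hk] at hv; norm_num at hv
  · intro hi; exact cvec_on_Ks hKs hi

lemma cvec_inj {Hs Ks Hs' Ks' : Finset (Fin d)} (hKs : Ks ⊆ Hsᶜ) (hKs' : Ks' ⊆ Hs'ᶜ)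
    (heq : cvec Hs Ks = cvec Hs' Ks') : Hs = Hs' ∧ Ks = Ks' := by
  constructor
  · apply Finset.coe_injective
    rw [← cvec_half_set Hs Ks hKs, ← cvec_half_set Hs' Ks' hKs', heq]
  · apply Finset.coe_injective
    rw [← cvec_one_set Hs Ks hKs, ← cvec_one_set Hs' Ks' hKs', heq]

lemma vSet_sum_ne {h : ℕ} (hd : d = 2*h+1) {p : Fin d → ℝ} (hp : p ∈ vSet d) :
    ∑ i, p i ≠ (d:ℝ)/2 := by
  have hdr : (d : ℝ) = 2*h+1 := by exact_mod_cast congrArg (Nat.cast : ℕ → ℝ) hd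
  rcases hp with ⟨-, hpns⟩ | ⟨hpcube, -⟩
  · intro hsum
    apply hpns
    constructor
    · rw [hsum, hdr]; linarith
    · rw [hsum, hdr]; linarith
  · intro hsum
    have := sum_eq_card_filter p Finset.univ (fun i _ => hpcube i)
    rw [hsum, hdr] at this
    set B := Finset.univ.filter (fun i => p i = 1)
    have h2 : (2*B.card : ℝ) = 2*h+1 := by push_cast; linarith
    have h3 : (2*B.card : ℕ) = 2*h+1 := by exact_mod_cast h2
    omega

lemma count_gt_half' {ι : Type*} [DecidableEq ι] (s : Finset ι) (mm : ℕ)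
    (hs : s.card = 2*mm) :
    (s.powerset.filter (fun K => mm < K.card)).card
      = (s.powerset.filter (fun K => K.card < mm)).card := by
  apply Finset.card_bij (fun K _ => s \ K)
  · intro K hK
    rw [Finset.mem_filter, Finset.mem_powerset] at hK ⊢
    have hsub : K ⊆ s := hK.1
    refine ⟨Finset.sdiff_subset, ?_⟩
    have hcle : K.card ≤ 2*mm := by
      have := Finset.card_le_card hsub
      omega
    rw [Finset.card_sdiff_of_subset hsub, hs]
    omega
  · intro K1 hK1 K2 hK2 heq
    rw [Finset.mem_filter, Finset.mem_powerset] at hK1 hK2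
    have : s \ (s \ K1) = s \ (s \ K2) := by rw [heq]
    rwa [Finset.sdiff_sdiff_eq_self hK1.1, Finset.sdiff_sdiff_eq_self hK2.1] at this
  · intro K hK
    rw [Finset.mem_filter, Finset.mem_powerset] at hK
    refine ⟨s \ K, ?_, ?_⟩
    · rw [Finset.mem_filter, Finset.mem_powerset]
      refine ⟨Finset.sdiff_subset, ?_⟩
      rw [Finset.card_sdiff_of_subset hK.1, hs]
      have := Finset.card_le_card hK.1
      omega
    · rw [Finset.sdiff_sdiff_eq_self hK.1]

lemma count_lt_half {ι : Type*} [DecidableEq ι] (s : Finset ι) (mm : ℕ)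
    (hs : s.card = 2*mm) :
    2 * ((s.powerset.filter (fun K => K.card < mm)).card) + (2*mm).choose mm
      = 2^(2*mm) := by
  classical
  have htot : s.powerset.card = 2^(2*mm) := by rw [Finset.card_powerset, hs]
  have hsplit1 : (s.powerset.filter (fun K => K.card < mm)).card
      + (s.powerset.filter (fun K => ¬ K.card < mm)).card = 2^(2*mm) := by
    rw [Finset.card_filter_add_card_filter_not]; exact htot
  have hsplit2 : ((s.powerset.filter (fun K => ¬ K.card < mm)).filter
        (fun K => K.card = mm)).card
      + ((s.powerset.filter (fun K => ¬ K.card < mm)).filter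
        (fun K => ¬ K.card = mm)).card
      = (s.powerset.filter (fun K => ¬ K.card < mm)).card := by
    rw [Finset.card_filter_add_card_filter_not]
  have he1 : (s.powerset.filter (fun K => ¬ K.card < mm)).filter (fun K => K.card = mm)
      = s.powerset.filter (fun K => K.card = mm) := by
    rw [Finset.filter_filter]
    apply Finset.filter_congr
    intro K _
    constructor
    · rintro ⟨-, h⟩; exact h
    · intro h; omega
  have he2 : (s.powerset.filter (fun K => ¬ K.card < mm)).filter (fun K => ¬ K.card = mm)
      = s.powerset.filter (fun K => mm < K.card) := by
    rw [Finset.filter_filter]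
    apply Finset.filter_congr
    intro K _
    constructor
    · rintro ⟨h1, h2⟩; omega
    · intro h; omega
  have hmid : (s.powerset.filter (fun K => K.card = mm)).card = (2*mm).choose mm := by
    have : s.powerset.filter (fun K => K.card = mm) = s.powersetCard mm := by
      rw [Finset.powersetCard_eq_filter]
    rw [this, Finset.card_powersetCard, hs]
  rw [he1, he2, hmid, count_gt_half' s mm hs] at hsplit2
  omega

lemma count_gt_half {ι : Type*} [DecidableEq ι] (s : Finset ι) (mm : ℕ)
    (hs : s.card = 2*mm) :
    (s.powerset.filter (fun K => mm < K.card)).card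
      = (s.powerset.filter (fun K => K.card < mm)).card :=
  count_gt_half' s mm hs

lemma cb_bound : ∀ m, 8 ≤ m → 65536 * Nat.centralBinom m ≤ 12870 * 4^m := by
  intro m hm
  induction m with
  | zero => omega
  | succ n ih =>
    rcases Nat.lt_or_ge n 8 with h8 | h8
    · have hn : n = 7 := by omega
      subst hn
      have : Nat.centralBinom 8 = 12870 := by decide
      rw [this]
      norm_num
    · have ihn := ih h8
      have hrec : (n+1) * Nat.centralBinom (n+1) = 2 * (2*n+1) * Nat.centralBinom n :=
        Nat.succ_mul_centralBinom_succ n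
      have key : (n+1) * (65536 * Nat.centralBinom (n+1)) ≤ (n+1) * (12870 * 4^(n+1)) := by
        calc (n+1) * (65536 * Nat.centralBinom (n+1))
            = 65536 * ((n+1) * Nat.centralBinom (n+1)) := by ring
          _ = 65536 * (2 * (2*n+1) * Nat.centralBinom n) := by rw [hrec]
          _ = (2 * (2*n+1)) * (65536 * Nat.centralBinom n) := by ring
          _ ≤ (2 * (2*n+1)) * (12870 * 4^n) := Nat.mul_le_mul_left _ ihn
          _ ≤ (4 * (n+1)) * (12870 * 4^n) := by
              apply Nat.mul_le_mul_right
              omega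
          _ = (n+1) * (12870 * 4^(n+1)) := by ring
      exact Nat.le_of_mul_le_mul_left key (by omega)

end XiAux


set_option maxHeartbeats 3000000 in
/-- There exists `d₀` such that for every `d ≥ d₀` with both `d` and `(d-1)/2` odd,
the graph of `Ξ` has edge expansion strictly less than `d/(√2)^d`. -/
theorem expansion_Xi_lt :
    ∃ d₀ : ℕ, ∀ d : ℕ, d₀ ≤ d → Odd d → Odd ((d - 1) / 2) →
      ∃ S : Set {x : Fin d → ℝ // x ∈ Set.extremePoints ℝ (Xi d)},
        S.Nonempty ∧ Sᶜ.Nonempty ∧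
        ((edgeCut (polyGraph (Xi d)) S).ncard : ℝ) /
            (min S.ncard (Sᶜ).ncard : ℕ) <
          d / Real.sqrt 2 ^ d := by
  classical
  use 100
  intro d hd100 hoddd hoddh'
  obtain ⟨hq, hdq⟩ := hoddd
  have hd : d = 2*((d-1)/2)+1 := by omega
  set h := (d-1)/2 with hhdef
  have hoddh : Odd h := hoddh'
  obtain ⟨mo, hmo⟩ := hoddh
  have hh3 : 3 ≤ h := by omega
  have hd0 : 0 < d := by omega
  have hdr : (d:ℝ) = 2*h+1 := by exact_mod_cast congrArg (Nat.cast : ℕ → ℝ) hd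
  have h49 : 49 ≤ h := by omega
  haveI : Finite {x : Fin d → ℝ // x ∈ Set.extremePoints ℝ (Xi d)} :=
    (XiAux.extremePoints_Xi_finite (d := d)).to_subtype
  set S : Set {x : Fin d → ℝ // x ∈ Set.extremePoints ℝ (Xi d)} :=
    {v | ∑ i, v.1 i < (d:ℝ)/2} with hSdef
  -- counting parameters
  set m2 := mo + 1 with hm2def
  have hn2 : h + 1 = 2*m2 := by omega
  have hm2_8 : 8 ≤ m2 := by omega
  set P2 := 2^(2*m2) with hP2def
  set X := (P2 - Nat.centralBinom m2)/2 with hXdef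
  have hcount : ∀ s : Finset (Fin d), s.card = h+1 →
      ((s.powerset.filter (fun K => 2*K.card < h + 1)).card = X ∧
       (s.powerset.filter (fun K => h + 1 < 2*K.card)).card = X ∧
       2*X + Nat.centralBinom m2 = P2) := by
    intro s hs
    have hs' : s.card = 2*m2 := by omega
    have hflt : s.powerset.filter (fun K => 2*K.card < h + 1)
        = s.powerset.filter (fun K => K.card < m2) :=
      Finset.filter_congr (fun K _ => by constructor <;> (intro; omega))
    have hfgt : s.powerset.filter (fun K => h + 1 < 2*K.card)
        = s.powerset.filter (fun K => m2 < K.card) :=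
      Finset.filter_congr (fun K _ => by constructor <;> (intro; omega))
    have h1 := XiAux.count_lt_half s m2 hs'
    have h2 := XiAux.count_gt_half s m2 hs'
    have hcb : Nat.centralBinom m2 = (2*m2).choose m2 := rfl
    rw [← hcb] at h1
    rw [hflt, hfgt]
    rw [← hP2def] at h1
    refine ⟨by omega, by rw [h2]; omega, by omega⟩
  -- a concrete h-subset for instantiation
  have hhd : h ≤ Fintype.card (Fin d) := by rw [Fintype.card_fin]; omega
  obtain ⟨Hs₀, -, hHs₀card⟩ :=
    Finset.exists_subset_card_eq (s := (Finset.univ : Finset (Fin d))) (n := h)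
      (by rwa [Finset.card_univ])
  have hcompl_card : ∀ A : Finset (Fin d), A.card = h → Aᶜ.card = h + 1 := by
    intro A hA
    rw [Finset.card_compl, hA, Fintype.card_fin]
    omega
  have hXeq := hcount Hs₀ᶜ (hcompl_card Hs₀ hHs₀card)
  have hX2 : 2*X + Nat.centralBinom m2 = P2 := hXeq.2.2
  have hX1 : 1 ≤ X := by
    have hmem : (∅ : Finset (Fin d)) ∈ Hs₀ᶜ.powerset.filter (fun K => 2*K.card < h + 1) := by
      rw [Finset.mem_filter, Finset.mem_powerset]
      refine ⟨Finset.empty_subset _, by simp only [Finset.card_empty]; omega⟩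
    have := Finset.card_pos.mpr ⟨∅, hmem⟩
    omega
  set C := d.choose h with hCdef
  have hC0 : 0 < C := Nat.choose_pos (by omega)
  -- the low and high center families
  set Λlow := ((Finset.univ : Finset (Fin d)).powersetCard h).sigma
      (fun Hs => (Hsᶜ.powerset).filter (fun K => 2*K.card < h + 1)) with hΛlowdef
  set Λhigh := ((Finset.univ : Finset (Fin d)).powersetCard h).sigma
      (fun Hs => (Hsᶜ.powerset).filter (fun K => h + 1 < 2*K.card)) with hΛhighdef
  have hmemlow : ∀ p ∈ Λlow, p.1.card = h ∧ p.2 ⊆ p.1ᶜ ∧ 2*p.2.card < h+1 := by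
    intro p hp
    rw [hΛlowdef, Finset.mem_sigma] at hp
    obtain ⟨h1, h2⟩ := hp
    rw [Finset.mem_powersetCard] at h1
    rw [Finset.mem_filter, Finset.mem_powerset] at h2
    exact ⟨h1.2, h2.1, h2.2⟩
  have hmemhigh : ∀ p ∈ Λhigh, p.1.card = h ∧ p.2 ⊆ p.1ᶜ ∧ h+1 < 2*p.2.card := by
    intro p hp
    rw [hΛhighdef, Finset.mem_sigma] at hp
    obtain ⟨h1, h2⟩ := hp
    rw [Finset.mem_powersetCard] at h1
    rw [Finset.mem_filter, Finset.mem_powerset] at h2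
    exact ⟨h1.2, h2.1, h2.2⟩
  have hcardlow : Λlow.card = C * X := by
    rw [hΛlowdef, Finset.card_sigma]
    have hcong : ∀ Hs ∈ (Finset.univ : Finset (Fin d)).powersetCard h,
        ((Hsᶜ.powerset).filter (fun K => 2*K.card < h + 1)).card = X := by
      intro Hs hHs
      rw [Finset.mem_powersetCard] at hHs
      exact (hcount Hsᶜ (hcompl_card Hs hHs.2)).1
    rw [Finset.sum_const_nat hcong, Finset.card_powersetCard, Finset.card_univ,
      Fintype.card_fin, hCdef]
  have hcardhigh : Λhigh.card = C * X := by
    rw [hΛhighdef, Finset.card_sigma]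
    have hcong : ∀ Hs ∈ (Finset.univ : Finset (Fin d)).powersetCard h,
        ((Hsᶜ.powerset).filter (fun K => h + 1 < 2*K.card)).card = X := by
      intro Hs hHs
      rw [Finset.mem_powersetCard] at hHs
      exact (hcount Hsᶜ (hcompl_card Hs hHs.2)).2.1
    rw [Finset.sum_const_nat hcong, Finset.card_powersetCard, Finset.card_univ,
      Fintype.card_fin, hCdef]
  -- images inside the vertex set
  set glow : {p // p ∈ Λlow} → {x : Fin d → ℝ // x ∈ Set.extremePoints ℝ (Xi d)} :=
    fun p => ⟨XiAux.cvec p.1.1 p.1.2, by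
      obtain ⟨h1, h2, h3⟩ := hmemlow p.1 p.2
      exact XiAux.center_extreme hd hh3 ⟨mo, hmo⟩ h1 h2 (Or.inl h3)⟩ with hglowdef
  set ghigh : {p // p ∈ Λhigh} → {x : Fin d → ℝ // x ∈ Set.extremePoints ℝ (Xi d)} :=
    fun p => ⟨XiAux.cvec p.1.1 p.1.2, by
      obtain ⟨h1, h2, h3⟩ := hmemhigh p.1 p.2
      exact XiAux.center_extreme hd hh3 ⟨mo, hmo⟩ h1 h2 (Or.inr h3)⟩ with hghighdef
  have hglow_inj : Function.Injective glow := by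
    intro p q hpq
    have hcv : XiAux.cvec p.1.1 p.1.2 = XiAux.cvec q.1.1 q.1.2 := by
      have := congrArg Subtype.val hpq
      exact this
    obtain ⟨hp1, hp2, -⟩ := hmemlow p.1 p.2
    obtain ⟨hq1, hq2, -⟩ := hmemlow q.1 q.2
    obtain ⟨e1, e2⟩ := XiAux.cvec_inj hp2 hq2 hcv
    apply Subtype.ext
    exact Sigma.ext e1 (heq_of_eq e2)
  have hghigh_inj : Function.Injective ghigh := by
    intro p q hpq
    have hcv : XiAux.cvec p.1.1 p.1.2 = XiAux.cvec q.1.1 q.1.2 :=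
      congrArg Subtype.val hpq
    obtain ⟨hp1, hp2, -⟩ := hmemhigh p.1 p.2
    obtain ⟨hq1, hq2, -⟩ := hmemhigh q.1 q.2
    obtain ⟨e1, e2⟩ := XiAux.cvec_inj hp2 hq2 hcv
    apply Subtype.ext
    exact Sigma.ext e1 (heq_of_eq e2)
  set Flow := Λlow.attach.image glow with hFlowdef
  set Fhigh := Λhigh.attach.image ghigh with hFhighdef
  have hFlowcard : Flow.card = C * X := by
    rw [hFlowdef, Finset.card_image_of_injective _ hglow_inj, Finset.card_attach,
      hcardlow]
  have hFhighcard : Fhigh.card = C * X := by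
    rw [hFhighdef, Finset.card_image_of_injective _ hghigh_inj, Finset.card_attach,
      hcardhigh]
  -- sums of centers
  have hsumlow : ∀ v ∈ Flow, v ∈ S := by
    intro v hv
    rw [hFlowdef, Finset.mem_image] at hv
    obtain ⟨p, -, rfl⟩ := hv
    obtain ⟨hp1, hp2, hp3⟩ := hmemlow p.1 p.2
    have hsum := XiAux.sum_cvec hp2
    rw [hp1] at hsum
    show ∑ i, (XiAux.cvec p.1.1 p.1.2) i < (d:ℝ)/2
    rw [hsum, hdr]
    have hlt : ((2*p.1.2.card : ℕ) : ℝ) < ((h + 1 : ℕ) : ℝ) := Nat.cast_lt.mpr hp3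
    push_cast at hlt
    linarith
  have hsumhigh : ∀ v ∈ Fhigh, v ∈ Sᶜ := by
    intro v hv
    rw [hFhighdef, Finset.mem_image] at hv
    obtain ⟨p, -, rfl⟩ := hv
    obtain ⟨hp1, hp2, hp3⟩ := hmemhigh p.1 p.2
    have hsum := XiAux.sum_cvec hp2
    rw [hp1] at hsum
    rw [Set.mem_compl_iff]
    intro hvS
    have hvS' : ∑ i, (XiAux.cvec p.1.1 p.1.2) i < (d:ℝ)/2 := hvS
    rw [hsum, hdr] at hvS'
    have hlt : ((h + 1 : ℕ) : ℝ) < ((2*p.1.2.card : ℕ) : ℝ) := Nat.cast_lt.mpr hp3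
    push_cast at hlt
    linarith
  -- cardinality bounds for the two sides
  have hSlow : C * X ≤ S.ncard := by
    have h1 : (↑Flow : Set {x : Fin d → ℝ // x ∈ Set.extremePoints ℝ (Xi d)}).ncard
        = Flow.card := Set.ncard_coe_finset Flow
    have h2 : (↑Flow : Set {x : Fin d → ℝ // x ∈ Set.extremePoints ℝ (Xi d)}) ⊆ S :=
      fun v hv => hsumlow v (Finset.mem_coe.mp hv)
    have h3 := Set.ncard_le_ncard h2 (Set.toFinite S)
    rw [h1, hFlowcard] at h3
    exact h3
  have hShigh : C * X ≤ (Sᶜ).ncard := by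
    have h1 : (↑Fhigh : Set {x : Fin d → ℝ // x ∈ Set.extremePoints ℝ (Xi d)}).ncard
        = Fhigh.card := Set.ncard_coe_finset Fhigh
    have h2 : (↑Fhigh : Set {x : Fin d → ℝ // x ∈ Set.extremePoints ℝ (Xi d)}) ⊆ Sᶜ :=
      fun v hv => hsumhigh v (Finset.mem_coe.mp hv)
    have h3 := Set.ncard_le_ncard h2 (Set.toFinite Sᶜ)
    rw [h1, hFhighcard] at h3
    exact h3
  have hCX1 : 1 ≤ C * X := Nat.one_le_iff_ne_zero.mpr (by positivity)
  have hSne : S.Nonempty := by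
    have : Flow.Nonempty := Finset.card_pos.mp (by omega)
    obtain ⟨v, hv⟩ := this
    exact ⟨v, hsumlow v hv⟩
  have hScne : Sᶜ.Nonempty := by
    have : Fhigh.Nonempty := Finset.card_pos.mp (by omega)
    obtain ⟨v, hv⟩ := this
    exact ⟨v, hsumhigh v hv⟩
  refine ⟨S, hSne, hScne, ?_⟩
  -- bound the edge cut
  set Γ := ((Finset.univ : Finset (Fin d)).powersetCard h).sigma
      (fun A => Aᶜ) with hΓdef
  have hΓcard : Γ.card = C * (h+1) := by
    rw [hΓdef, Finset.card_sigma]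
    have hcong : ∀ A ∈ (Finset.univ : Finset (Fin d)).powersetCard h, Aᶜ.card = h+1 := by
      intro A hA
      rw [Finset.mem_powersetCard] at hA
      rw [Finset.card_compl, hA.2, Fintype.card_fin]
      omega
    rw [Finset.sum_const_nat hcong, Finset.card_powersetCard, Finset.card_univ,
      Fintype.card_fin, hCdef]
  have hcut : (edgeCut (polyGraph (Xi d)) S).ncard ≤ C * (h+1) := by
    set Q : Sym2 {x : Fin d → ℝ // x ∈ Set.extremePoints ℝ (Xi d)} →
        ((_ : Finset (Fin d)) × Fin d) → Prop := fun e q =>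
      ∃ x y : {x : Fin d → ℝ // x ∈ Set.extremePoints ℝ (Xi d)},
        e = s(x, y) ∧ x.1 = XiAux.ind q.1 ∧ y.1 = XiAux.ind (insert q.2 q.1) ∧
        q.1.card = h ∧ q.2 ∉ q.1 with hQdef
    have hex : ∀ e ∈ edgeCut (polyGraph (Xi d)) S, ∃ q, Q e q := by
      intro e he
      obtain ⟨hedge, x, y, hxS, hyS, rfl⟩ := he
      have hadj : (polyGraph (Xi d)).Adj x y :=
        ((polyGraph (Xi d)).mem_edgeSet).mp hedge
      obtain ⟨hne, hext⟩ := hadj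
      have hxv : x.1 ∈ vSet d := XiAux.extremePoints_Xi_sub x.2
      have hyv : y.1 ∈ vSet d := XiAux.extremePoints_Xi_sub y.2
      have hxs : ∑ i, x.1 i < (d:ℝ)/2 := hxS
      have hys : (d:ℝ)/2 < ∑ i, y.1 i := by
        have h1 : ¬ (∑ i, y.1 i < (d:ℝ)/2) := hyS
        have h2 := XiAux.vSet_sum_ne hd hyv
        push_neg at h1
        exact lt_of_le_of_ne h1 (Ne.symm h2)
      obtain ⟨A, i, hA, hiA, hu, hv⟩ := XiAux.crossing_char hd hh3 hxv hyv hxs hys hext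
      exact ⟨⟨A, i⟩, x, y, rfl, hu, by rw [hv], hA, hiA⟩
    set f : Sym2 {x : Fin d → ℝ // x ∈ Set.extremePoints ℝ (Xi d)} →
        ((_ : Finset (Fin d)) × Fin d) := fun e =>
      if he : ∃ q, Q e q then he.choose else ⟨∅, ⟨0, hd0⟩⟩ with hfdef
    have hfspec : ∀ e ∈ edgeCut (polyGraph (Xi d)) S, Q e (f e) := by
      intro e he
      rw [hfdef]
      simp only
      rw [dif_pos (hex e he)]
      exact (hex e he).choose_spec
    have hmaps : ∀ e ∈ edgeCut (polyGraph (Xi d)) S, f e ∈ (Γ : Set _) := by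
      intro e he
      obtain ⟨x, y, -, -, -, hcard, hnotmem⟩ := hfspec e he
      rw [Finset.mem_coe, hΓdef, Finset.mem_sigma]
      constructor
      · rw [Finset.mem_powersetCard]
        exact ⟨Finset.subset_univ _, hcard⟩
      · rwa [Finset.mem_compl]
    have hinj : Set.InjOn f (edgeCut (polyGraph (Xi d)) S) := by
      intro e1 he1 e2 he2 hfe
      obtain ⟨x1, y1, he1', hx1, hy1, -, -⟩ := hfspec e1 he1
      obtain ⟨x2, y2, he2', hx2, hy2, -, -⟩ := hfspec e2 he2
      rw [hfe] at hx1 hy1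
      have hx : x1 = x2 := Subtype.ext (hx1.trans hx2.symm)
      have hy : y1 = y2 := Subtype.ext (hy1.trans hy2.symm)
      rw [he1', he2', hx, hy]
    have hbound := Set.ncard_le_ncard_of_injOn f hmaps hinj (Γ.finite_toSet)
    rwa [Set.ncard_coe_finset, hΓcard] at hbound
  -- final arithmetic
  have hmin : (C*X : ℕ) ≤ min S.ncard (Sᶜ).ncard := le_min hSlow hShigh
  have hminpos : 0 < min S.ncard (Sᶜ).ncard := lt_of_lt_of_le hCX1 hmin
  have hsq2 : Real.sqrt 2 ^ 2 = 2 := Real.sq_sqrt (by norm_num)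
  have hsqrtd : Real.sqrt 2 ^ d = 2^h * Real.sqrt 2 := by
    rw [hd, pow_succ, pow_mul, hsq2]
  have hsq2lt : Real.sqrt 2 < 1.41422 := by
    nlinarith [Real.sq_sqrt (show (0:ℝ) ≤ 2 by norm_num), Real.sqrt_nonneg 2,
      sq_nonneg (Real.sqrt 2 - 1.41422)]
  have hsq2pos : (0:ℝ) < Real.sqrt 2 := Real.sqrt_pos.mpr (by norm_num)
  have hXr : 2*(X:ℝ) + (Nat.centralBinom m2 : ℝ) = 2^(h+1) := by
    have hnn : (2*X + Nat.centralBinom m2 : ℕ) = 2^(h+1) := by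
      rw [hX2, hP2def]
      congr 1
      omega
    exact_mod_cast hnn
  have hcb := XiAux.cb_bound m2 hm2_8
  have hcbr : 65536 * (Nat.centralBinom m2 : ℝ) ≤ 12870 * 2^(h+1) := by
    have hnn : (65536 * Nat.centralBinom m2 : ℕ) ≤ 12870 * 2^(h+1) := by
      calc 65536 * Nat.centralBinom m2 ≤ 12870 * 4^m2 := hcb
        _ = 12870 * 2^(2*m2) := by
            rw [show (4:ℕ) = 2^2 from rfl, ← pow_mul]
        _ = 12870 * 2^(h+1) := by rw [← hn2]
    have := (Nat.cast_le (α := ℝ)).mpr hnn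
    push_cast at this
    linarith
  have hp2h : (0:ℝ) < 2^h := by positivity
  have h2h1 : (2:ℝ)^(h+1) = 2 * 2^h := by rw [pow_succ]; ring
  have hXlb : (2:ℝ)^h * (52666/65536) ≤ (X:ℝ) := by
    rw [h2h1] at hXr hcbr
    linarith
  have hhr : (49:ℝ) ≤ h := by exact_mod_cast Nat.cast_le.mpr h49
  have hnum : ((edgeCut (polyGraph (Xi d)) S).ncard : ℝ) ≤ (C:ℝ) * ((h:ℝ)+1) := by
    have h' := (Nat.cast_le (α := ℝ)).mpr hcut
    push_cast at h'
    linarith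
  have hden : (C:ℝ) * (X:ℝ) ≤ ((min S.ncard (Sᶜ).ncard : ℕ) : ℝ) := by
    have h' := (Nat.cast_le (α := ℝ)).mpr hmin
    push_cast at h'
    push_cast
    linarith
  have hXr1 : (1:ℝ) ≤ (X:ℝ) := by exact_mod_cast Nat.one_le_cast.mpr hX1
  have hCr1 : (1:ℝ) ≤ (C:ℝ) := by
    exact_mod_cast Nat.one_le_cast.mpr (Nat.one_le_iff_ne_zero.mpr (by omega))
  have hCXpos : (0:ℝ) < (C:ℝ) * (X:ℝ) := by nlinarith
  calc ((edgeCut (polyGraph (Xi d)) S).ncard : ℝ) / ((min S.ncard (Sᶜ).ncard : ℕ) : ℝ)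
      ≤ ((C:ℝ) * ((h:ℝ)+1)) / ((C:ℝ) * (X:ℝ)) := by
        apply div_le_div₀ (by positivity) hnum hCXpos hden
    _ = ((h:ℝ)+1)/(X:ℝ) := by
        rw [mul_div_mul_left _ _ (by linarith : (C:ℝ) ≠ 0)]
    _ < (d:ℝ) / (2^h * Real.sqrt 2) := by
        rw [div_lt_div_iff₀ (by linarith) (by positivity)]
        have e1 : ((h:ℝ)+1) * (2^h * Real.sqrt 2) ≤ ((h:ℝ)+1) * (2^h * 1.41422) := by
          apply mul_le_mul_of_nonneg_left _ (by linarith)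
          apply mul_le_mul_of_nonneg_left hsq2lt.le (by positivity)
        have escalar : ((h:ℝ)+1) * 1.41422 < (2*(h:ℝ)+1) * (52666/65536) := by
          nlinarith [hhr]
        have e2 : ((h:ℝ)+1) * (2^h * 1.41422) < (d:ℝ) * (2^h * (52666/65536)) := by
          rw [hdr]
          nlinarith [hp2h, escalar]
        have e3 : (d:ℝ) * (2^h * (52666/65536)) ≤ (d:ℝ) * (X:ℝ) := by
          apply mul_le_mul_of_nonneg_left hXlb
          rw [hdr]
          linarith
        linarith
    _ = (d:ℝ) / (Real.sqrt 2 ^ d) := by rw [hsqrtd]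
end
end
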